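/- arXiv:2307.09736 — 7 statements merged into one kernel-verified Lean document; each statement's English description precedes it below -/
import Mathlib

section
/- Let G be a strongly regular graph with parameters (n,k,λ,μ), let H be a symmetric [α]-Hadamard matrix of order ζ ≥ 2 (with 0 ≤ α ≤ ζ), and let θ = max{k/2, λ, μ, (n−k−1)/2, n−2−2k+μ, n−2k+λ}. Then n+1 ≤ M_ζ(K_{2, θ(ζ+α)+1}; 2), i.e., there exists a 2-coloring of the edges of the complete multipartite graph K_{n×ζ} with no monochromatic copy of the complete bipartite graph K_{2, θ(ζ+α)+1}. -/
open Finset Matrix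

/-- The complete multipartite graph `K_{c×s}` with `c` partite sets, each of size `s`,
on the vertex set `Fin c × Fin s`. -/
def multiK (c s : ℕ) : SimpleGraph (Fin c × Fin s) where
  Adj v w := v.1 ≠ w.1
  symm := ⟨fun _ _ h => Ne.symm h⟩
  loopless := ⟨fun _ h => h rfl⟩

/-- The symmetric edge `k`-coloring `C` of the graph `G` contains a monochromatic copy of the
complete bipartite graph `K_{2,n}` in color `i`: there are two distinct vertices `a b` and a
set `S` of `n` further vertices all joined to both `a` and `b` by edges of color `i`. -/
def HasMonoK2 {V : Type*} (G : SimpleGraph V) {k : ℕ}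
    (C : V → V → Fin k) (i : Fin k) (n : ℕ) : Prop :=
  ∃ (a b : V) (S : Finset V), a ≠ b ∧ a ∉ S ∧ b ∉ S ∧ S.card = n ∧
    ∀ v ∈ S, G.Adj a v ∧ G.Adj b v ∧ C a v = i ∧ C b v = i

/-- Every symmetric `k`-coloring of the edges of `K_{c×s}` contains a monochromatic copy of
`K_{2, ns i}` in some color `i`. -/
def ArrowsVec (c s k : ℕ) (ns : Fin k → ℕ) : Prop :=
  ∀ C : (Fin c × Fin s) → (Fin c × Fin s) → Fin k,
    (∀ v w, C v w = C w v) → ∃ i : Fin k, HasMonoK2 (multiK c s) C i (ns i)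

/-- Every symmetric `k`-coloring of the edges of `K_{c×s}` contains a monochromatic `K_{2,n}`. -/
def Arrows (c s n k : ℕ) : Prop := ArrowsVec c s k (fun _ => n)

/-- The set multipartite Ramsey number `M_s(K_{2,n}; k)`: the smallest positive integer `c` such
that every `k`-coloring of the edges of `K_{c×s}` contains a monochromatic `K_{2,n}`. -/
noncomputable def setRamsey (s n k : ℕ) : ℕ := sInf {c : ℕ | 0 < c ∧ Arrows c s n k}

/-- The size multipartite Ramsey number `m_c(K_{2,n}; k)`: the smallest positive integer `s` such
that every `k`-coloring of the edges of `K_{c×s}` contains a monochromatic `K_{2,n}`. -/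
noncomputable def sizeRamsey (c n k : ℕ) : ℕ := sInf {s : ℕ | 0 < s ∧ Arrows c s n k}

/-- The size multipartite Ramsey number `m_c(K_{2,n₁},…,K_{2,n_k})`. -/
noncomputable def sizeRamseyVec (c k : ℕ) (ns : Fin k → ℕ) : ℕ :=
  sInf {s : ℕ | 0 < s ∧ ArrowsVec c s k ns}

/-- All entries of the matrix `H` are `1` or `-1`. -/
def PMOne {ι : Type*} (H : Matrix ι ι ℤ) : Prop := ∀ i j, H i j = 1 ∨ H i j = -1

/-- `H` is an `[α]`-Hadamard matrix: a square `±1` matrix such that `α` is an upper bound for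
`|(H * Hᵀ) i j|` over all pairs `i ≠ j`. -/
def IsBHadamard {ι : Type*} [Fintype ι] (α : ℕ) (H : Matrix ι ι ℤ) : Prop :=
  PMOne H ∧ ∀ i j, i ≠ j → |(H * Hᵀ) i j| ≤ (α : ℤ)

/-- `H` is an `α`-Hadamard matrix: a square `±1` matrix such that `α` is the maximum of
`|(H * Hᵀ) i j|` over all pairs `i ≠ j`. -/
def IsEHadamard {ι : Type*} [Fintype ι] (α : ℕ) (H : Matrix ι ι ℤ) : Prop :=
  IsBHadamard α H ∧ ∃ i j, i ≠ j ∧ |(H * Hᵀ) i j| = (α : ℤ)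

/-- `H` is a Hadamard matrix: a square `±1` matrix with `H * Hᵀ = ζ • 1`. -/
def IsHadamard {ι : Type*} [Fintype ι] [DecidableEq ι] (H : Matrix ι ι ℤ) : Prop :=
  PMOne H ∧ H * Hᵀ = (Fintype.card ι : ℤ) • (1 : Matrix ι ι ℤ)


lemma step_lemma {c : ℕ} (f : Fin c → Fin c → Fin 2) (X : Finset (Fin c)) (v : Fin c) :
    ∃ (d : Fin 2) (Y : Finset (Fin c)), Y ⊆ X.erase v ∧ X.card ≤ 2 * Y.card + 1 ∧
      ∀ y ∈ Y, f v y = d := by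
  classical
  set Y0 := (X.erase v).filter (fun y => f v y = 0) with hY0
  set Y1 := (X.erase v).filter (fun y => ¬ f v y = 0) with hY1
  have hsum : Y0.card + Y1.card = (X.erase v).card := card_filter_add_card_filter_not _
  have hec : X.card ≤ (X.erase v).card + 1 := by
    by_cases h : v ∈ X
    · rw [Finset.card_erase_of_mem h]; omega
    · rw [Finset.erase_eq_of_notMem h]; omega
  rcases le_total Y1.card Y0.card with h | h
  · exact ⟨0, Y0, filter_subset _ _, by omega, fun y hy => (mem_filter.1 hy).2⟩
  · refine ⟨1, Y1, filter_subset _ _, by omega, fun y hy => ?_⟩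
    exact Fin.eq_one_of_ne_zero _ (mem_filter.1 hy).2

lemma arrows_big (s m c : ℕ) (hs : 1 ≤ s) (hc : 8 * m + 8 ≤ c) : Arrows c s m 2 := by
  classical
  intro C hsym
  have hc0 : 0 < c := by omega
  set p0 : Fin s := ⟨0, hs⟩ with hp0
  set f : Fin c → Fin c → Fin 2 := fun x y => C (x, p0) (y, p0) with hf
  set v1 : Fin c := ⟨0, hc0⟩ with hv1
  obtain ⟨d1, Y1, hY1sub, hY1card, hY1col⟩ := step_lemma f univ v1
  have hcard1 : 4 * m + 4 ≤ Y1.card := by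
    have := Finset.card_univ (α := Fin c)
    simp only [Fintype.card_fin] at this
    omega
  obtain ⟨v2, hv2⟩ : ∃ v2, v2 ∈ Y1 := Finset.card_pos.mp (by omega) |>.exists_mem
  obtain ⟨d2, Y2, hY2sub, hY2card, hY2col⟩ := step_lemma f Y1 v2
  have hcard2 : 2 * m + 2 ≤ Y2.card := by omega
  obtain ⟨v3, hv3⟩ : ∃ v3, v3 ∈ Y2 := Finset.card_pos.mp (by omega) |>.exists_mem
  obtain ⟨d3, Y3, hY3sub, hY3card, hY3col⟩ := step_lemma f Y2 v3
  have hcard3 : m ≤ Y3.card := by omega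
  obtain ⟨S', hS'sub, hS'card⟩ := Finset.exists_subset_card_eq hcard3
  -- containments
  have hY2inY1 : Y2 ⊆ Y1 := hY2sub.trans (Finset.erase_subset _ _)
  have hY3inY2 : Y3 ⊆ Y2 := hY3sub.trans (Finset.erase_subset _ _)
  have hS'Y2 : S' ⊆ Y2 := hS'sub.trans hY3inY2
  have hS'Y1 : S' ⊆ Y1 := hS'Y2.trans hY2inY1
  have hv1Y1 : v1 ∉ Y1 := fun h => (Finset.mem_erase.1 (hY1sub h)).1 rfl
  have hv2Y2 : v2 ∉ Y2 := fun h => (Finset.mem_erase.1 (hY2sub h)).1 rfl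
  have hv3Y3 : v3 ∉ Y3 := fun h => (Finset.mem_erase.1 (hY3sub h)).1 rfl
  have hv2ne1 : v2 ≠ v1 := fun h => hv1Y1 (h ▸ hv2)
  have hv3ne1 : v3 ≠ v1 := fun h => hv1Y1 (h ▸ hY2inY1 hv3)
  have hv3ne2 : v3 ≠ v2 := fun h => hv2Y2 (h ▸ hv3)
  -- pick two equal colors
  have key : ∃ (i : Fin 2) (a b : Fin c), a ≠ b ∧ a ∉ S' ∧ b ∉ S' ∧
      ∀ y ∈ S', f a y = i ∧ f b y = i := by
    have htri : d1 = d2 ∨ d1 = d3 ∨ d2 = d3 := by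
      rcases Fin.exists_fin_two.mp ⟨d1, rfl⟩ with _ | _ <;> omega
    rcases htri with h | h | h
    · exact ⟨d1, v1, v2, hv2ne1.symm, fun hh => hv1Y1 (hS'Y1 hh),
        fun hh => hv2Y2 (hS'Y2 hh),
        fun y hy => ⟨hY1col y (hS'Y1 hy), h ▸ hY2col y (hS'Y2 hy)⟩⟩
    · exact ⟨d1, v1, v3, hv3ne1.symm, fun hh => hv1Y1 (hS'Y1 hh),
        fun hh => hv3Y3 (hS'sub hh),
        fun y hy => ⟨hY1col y (hS'Y1 hy), h ▸ hY3col y (hS'sub hy)⟩⟩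
    · exact ⟨d2, v2, v3, hv3ne2.symm, fun hh => hv2Y2 (hS'Y2 hh),
        fun hh => hv3Y3 (hS'sub hh),
        fun y hy => ⟨hY2col y (hS'Y2 hy), h ▸ hY3col y (hS'sub hy)⟩⟩
  obtain ⟨i, a, b, hab, haS, hbS, hcol⟩ := key
  refine ⟨i, (a, p0), (b, p0), S'.map ⟨fun j => (j, p0), fun x y h => (Prod.mk.injEq _ _ _ _ ▸ h).1⟩,
    fun h => hab (congrArg Prod.fst h), ?_, ?_, by simp [hS'card], ?_⟩
  · simp only [Finset.mem_map, Function.Embedding.coeFn_mk]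
    rintro ⟨j, hj, hje⟩
    exact haS ((Prod.mk.injEq _ _ _ _ ▸ hje).1 ▸ hj)
  · simp only [Finset.mem_map, Function.Embedding.coeFn_mk]
    rintro ⟨j, hj, hje⟩
    exact hbS ((Prod.mk.injEq _ _ _ _ ▸ hje).1 ▸ hj)
  · simp only [Finset.mem_map, Function.Embedding.coeFn_mk]
    rintro v ⟨j, hj, rfl⟩
    have h1 : a ≠ j := fun h => haS (h ▸ hj)
    have h2 : b ≠ j := fun h => hbS (h ▸ hj)
    exact ⟨h1, h2, (hcol j hj).1, (hcol j hj).2⟩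

lemma mono_transfer {c n s : ℕ} (h : c ≤ n) (C : (Fin n × Fin s) → (Fin n × Fin s) → Fin 2)
    (i : Fin 2) (m : ℕ)
    (hm : HasMonoK2 (multiK c s) (fun p q => C (Fin.castLE h p.1, p.2) (Fin.castLE h q.1, q.2)) i m) :
    HasMonoK2 (multiK n s) C i m := by
  obtain ⟨a, b, S, hab, haS, hbS, hcard, hall⟩ := hm
  set ι : Fin c × Fin s ↪ Fin n × Fin s :=
    ⟨fun p => (Fin.castLE h p.1, p.2), by
      rintro ⟨x1, x2⟩ ⟨y1, y2⟩ he
      simp only [Prod.mk.injEq] at he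
      exact Prod.ext (Fin.castLE_injective h he.1) he.2⟩ with hι
  refine ⟨ι a, ι b, S.map ι, fun he => hab (ι.injective he), ?_, ?_, by simp [hcard], ?_⟩
  · simp only [Finset.mem_map]
    rintro ⟨j, hj, hje⟩
    exact haS (ι.injective hje ▸ hj)
  · simp only [Finset.mem_map]
    rintro ⟨j, hj, hje⟩
    exact hbS (ι.injective hje ▸ hj)
  · simp only [Finset.mem_map]
    rintro v ⟨j, hj, rfl⟩
    obtain ⟨h1, h2, h3, h4⟩ := hall j hj
    refine ⟨?_, ?_, h3, h4⟩
    · exact fun he => h1 (Fin.castLE_injective h he)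
    · exact fun he => h2 (Fin.castLE_injective h he)


section KEY
variable {V : Type*} [Fintype V] (G : SimpleGraph V) [DecidableRel G.Adj]

set_option maxHeartbeats 1000000 in
lemma key_coloring (n k ℓ μ : ℕ) (hG : G.IsSRGWith n k ℓ μ)
    (ζ α : ℕ) (hα : α ≤ ζ)
    (H : Matrix (Fin ζ) (Fin ζ) ℤ) (hH : IsBHadamard α H) (hHsymm : H.IsSymm)
    (θ : ℚ)
    (hθ : θ = max (max (max ((k : ℚ) / 2) (ℓ : ℚ)) (max ((μ : ℚ)) (((n : ℚ) - k - 1) / 2)))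
      (max ((n : ℚ) - 2 - 2 * k + μ) ((n : ℚ) - 2 * k + ℓ)))
    (T : ℕ) (hT : (T : ℚ) = θ * (ζ + α)) :
    ∃ C : (Fin n × Fin ζ) → (Fin n × Fin ζ) → Fin 2,
      (∀ v w, C v w = C w v) ∧ ∀ i : Fin 2, ¬ HasMonoK2 (multiK n ζ) C i (T + 1) := by
  classical
  set e : V ≃ Fin n := Fintype.equivFinOfCardEq hG.card with he
  set C : (Fin n × Fin ζ) → (Fin n × Fin ζ) → Fin 2 :=
    fun p q => if (G.Adj (e.symm p.1) (e.symm q.1) ↔ H p.2 q.2 = 1) then 0 else 1 with hC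
  have hCsymm : ∀ v w, C v w = C w v := by
    intro p q
    simp only [hC]
    exact if_congr (iff_congr (G.adj_comm _ _) (by rw [hHsymm.apply])) rfl rfl
  refine ⟨C, hCsymm, ?_⟩
  -- basic theta facts
  have hθk : (k : ℚ) / 2 ≤ θ := by rw [hθ]; apply le_max_of_le_left; apply le_max_of_le_left; exact le_max_left _ _
  have hθl : (ℓ : ℚ) ≤ θ := by rw [hθ]; apply le_max_of_le_left; apply le_max_of_le_left; exact le_max_right _ _
  have hθm : (μ : ℚ) ≤ θ := by rw [hθ]; apply le_max_of_le_left; apply le_max_of_le_right; exact le_max_left _ _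
  have hθn : ((n : ℚ) - k - 1) / 2 ≤ θ := by rw [hθ]; apply le_max_of_le_left; apply le_max_of_le_right; exact le_max_right _ _
  have hθc1 : (n : ℚ) - 2 - 2 * k + μ ≤ θ := by rw [hθ]; apply le_max_of_le_right; exact le_max_left _ _
  have hθc2 : (n : ℚ) - 2 * k + ℓ ≤ θ := by rw [hθ]; apply le_max_of_le_right; exact le_max_right _ _
  have hθ0 : 0 ≤ θ := le_trans (by positivity) hθk
  intro i hmono
  obtain ⟨a, b, S, hab, haS, hbS, hScard, hall⟩ := hmono
  set u : V := e.symm a.1 with hu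
  set v : V := e.symm b.1 with hv
  set i₀ : Fin ζ := a.2 with hi₀
  set j₀ : Fin ζ := b.2 with hj₀
  obtain ⟨s, hsi⟩ : ∃ s : ℤ, ((i = 0 ∧ s = 1) ∨ (i = 1 ∧ s = -1)) := by
    have hi2 : i = 0 ∨ i = 1 := by omega
    rcases hi2 with h | h
    · exact ⟨1, Or.inl ⟨h, rfl⟩⟩
    · exact ⟨-1, Or.inr ⟨h, rfl⟩⟩
  have hs1 : s = 1 ∨ s = -1 := by
    rcases hsi with ⟨_, h⟩ | ⟨_, h⟩
    · exact Or.inl h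
    · exact Or.inr h
  have hcolor : ∀ (x : Fin ζ) (y : Fin ζ) (P : Prop) [Decidable P],
      ((if (P ↔ H x y = 1) then (0 : Fin 2) else 1) = i) ↔ (P ↔ H x y = s) := by
    intro x y P _
    rcases hsi with ⟨hi0, hs0⟩ | ⟨hi0, hs0⟩ <;> subst hi0 <;> subst hs0 <;>
      rcases hH.1 x y with h | h <;> by_cases hP : P <;>
      simp [h, hP, Fin.ext_iff] <;> omega
  set F : Finset (Fin n × Fin ζ) := univ.filter (fun p =>
    a.1 ≠ p.1 ∧ b.1 ≠ p.1 ∧ (G.Adj u (e.symm p.1) ↔ H i₀ p.2 = s) ∧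
      (G.Adj v (e.symm p.1) ↔ H j₀ p.2 = s)) with hF
  have hSF : S ⊆ F := by
    intro x hx
    obtain ⟨h1, h2, h3, h4⟩ := hall x hx
    refine mem_filter.mpr ⟨mem_univ _, h1, h2, ?_, ?_⟩
    · exact (hcolor i₀ x.2 _).mp h3
    · exact (hcolor j₀ x.2 _).mp h4
  have hTF : T + 1 ≤ F.card := hScard ▸ Finset.card_le_card hSF
  set cnt : ℤ → ℤ → ℕ := fun x y => (univ.filter fun t : Fin ζ => H i₀ t = x ∧ H j₀ t = y).card
    with hcnt
  set W : Finset V := univ.filter (fun w => w ≠ u ∧ w ≠ v) with hW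
  have hFsum : F.card = ∑ w : V, (univ.filter fun t : Fin ζ =>
      (w ≠ u ∧ w ≠ v ∧ (G.Adj u w ↔ H i₀ t = s) ∧ (G.Adj v w ↔ H j₀ t = s))).card := by
    have hkey := Fintype.sum_equiv e
      (fun w : V => ∑ t : Fin ζ, if (w ≠ u ∧ w ≠ v ∧ (G.Adj u w ↔ H i₀ t = s) ∧
        (G.Adj v w ↔ H j₀ t = s)) then 1 else 0)
      (fun x : Fin n => ∑ t : Fin ζ, if (a.1 ≠ x ∧ b.1 ≠ x ∧ (G.Adj u (e.symm x) ↔ H i₀ t = s) ∧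
        (G.Adj v (e.symm x) ↔ H j₀ t = s)) then 1 else 0) ?_
    · rw [hF, Finset.card_filter, Fintype.sum_prod_type, ← hkey]
      exact Finset.sum_congr rfl (fun w _ => (Finset.card_filter _ _).symm)
    · intro w
      have h1 : (w ≠ u) = (a.1 ≠ e w) := by
        simp only [hu, ne_eq, eq_comm (a := a.1), Equiv.eq_symm_apply]
      have h2 : (w ≠ v) = (b.1 ≠ e w) := by
        simp only [hv, ne_eq, eq_comm (a := b.1), Equiv.eq_symm_apply]
      simp [Equiv.symm_apply_apply, ← h1, ← h2]
  have hflip : ∀ x : ℤ, (x = 1 ∨ x = -1) → (¬ (x = s) ↔ x = -s) := by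
    rcases hs1 with rfl | rfl <;> rintro x (rfl | rfl) <;> norm_num
  set Q11 := (W.filter (fun w => G.Adj u w)).filter (fun w => G.Adj v w) with hQ11
  set Q10 := (W.filter (fun w => G.Adj u w)).filter (fun w => ¬G.Adj v w) with hQ10
  set Q01 := (W.filter (fun w => ¬G.Adj u w)).filter (fun w => G.Adj v w) with hQ01
  set Q00 := (W.filter (fun w => ¬G.Adj u w)).filter (fun w => ¬G.Adj v w) with hQ00
  have hFdec : F.card = Q11.card * cnt s s + Q10.card * cnt s (-s) + Q01.card * cnt (-s) s
      + Q00.card * cnt (-s) (-s) := by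
    have hterm : ∀ w ∈ W, (univ.filter fun t : Fin ζ =>
        (w ≠ u ∧ w ≠ v ∧ (G.Adj u w ↔ H i₀ t = s) ∧ (G.Adj v w ↔ H j₀ t = s))).card
        = cnt (if G.Adj u w then s else -s) (if G.Adj v w then s else -s) := by
      intro w hw
      obtain ⟨-, hwu, hwv⟩ := mem_filter.mp hw
      show _ = (univ.filter fun t : Fin ζ => H i₀ t = (if G.Adj u w then s else -s) ∧
        H j₀ t = (if G.Adj v w then s else -s)).card
      congr 1
      apply Finset.filter_congr
      intro t _
      simp only [ne_eq, hwu, hwv, not_false_eq_true, true_and]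
      constructor
      · rintro ⟨ha1, ha2⟩
        constructor
        · by_cases hA : G.Adj u w
          · rw [if_pos hA]; exact ha1.mp hA
          · rw [if_neg hA]; exact (hflip _ (hH.1 i₀ t)).mp (fun hh => hA (ha1.mpr hh))
        · by_cases hA : G.Adj v w
          · rw [if_pos hA]; exact ha2.mp hA
          · rw [if_neg hA]; exact (hflip _ (hH.1 j₀ t)).mp (fun hh => hA (ha2.mpr hh))
      · rintro ⟨ha1, ha2⟩
        constructor
        · by_cases hA : G.Adj u w
          · rw [if_pos hA] at ha1; exact ⟨fun _ => ha1, fun _ => hA⟩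
          · rw [if_neg hA] at ha1
            exact ⟨fun hh => absurd hh hA, fun hh => absurd hh ((hflip _ (hH.1 i₀ t)).mpr ha1)⟩
        · by_cases hA : G.Adj v w
          · rw [if_pos hA] at ha2; exact ⟨fun _ => ha2, fun _ => hA⟩
          · rw [if_neg hA] at ha2
            exact ⟨fun hh => absurd hh hA, fun hh => absurd hh ((hflip _ (hH.1 j₀ t)).mpr ha2)⟩
    have hvanish : ∀ w ∈ (univ : Finset V), w ∉ W → (univ.filter fun t : Fin ζ =>
        (w ≠ u ∧ w ≠ v ∧ (G.Adj u w ↔ H i₀ t = s) ∧ (G.Adj v w ↔ H j₀ t = s))).card = 0 := by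
      intro w _ hw
      rw [Finset.card_eq_zero, Finset.filter_eq_empty_iff]
      rintro t - ⟨h1, h2, -⟩
      exact hw (mem_filter.mpr ⟨mem_univ _, h1, h2⟩)
    rw [hFsum, ← Finset.sum_subset (Finset.subset_univ W) hvanish,
      Finset.sum_congr rfl hterm,
      ← Finset.sum_filter_add_sum_filter_not W (fun w => G.Adj u w),
      ← Finset.sum_filter_add_sum_filter_not (W.filter (fun w => G.Adj u w)) (fun w => G.Adj v w),
      ← Finset.sum_filter_add_sum_filter_not (W.filter (fun w => ¬ G.Adj u w)) (fun w => G.Adj v w)]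
    have c11 : ∑ w ∈ Q11, cnt (if G.Adj u w then s else -s) (if G.Adj v w then s else -s)
        = Q11.card * cnt s s := by
      rw [Finset.sum_congr rfl (fun w hw => ?_), Finset.sum_const, smul_eq_mul]
      obtain ⟨hw1, hw2⟩ := mem_filter.mp hw
      rw [if_pos (mem_filter.mp hw1).2, if_pos hw2]
    have c10 : ∑ w ∈ Q10, cnt (if G.Adj u w then s else -s) (if G.Adj v w then s else -s)
        = Q10.card * cnt s (-s) := by
      rw [Finset.sum_congr rfl (fun w hw => ?_), Finset.sum_const, smul_eq_mul]
      obtain ⟨hw1, hw2⟩ := mem_filter.mp hw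
      rw [if_pos (mem_filter.mp hw1).2, if_neg hw2]
    have c01 : ∑ w ∈ Q01, cnt (if G.Adj u w then s else -s) (if G.Adj v w then s else -s)
        = Q01.card * cnt (-s) s := by
      rw [Finset.sum_congr rfl (fun w hw => ?_), Finset.sum_const, smul_eq_mul]
      obtain ⟨hw1, hw2⟩ := mem_filter.mp hw
      rw [if_neg (mem_filter.mp hw1).2, if_pos hw2]
    have c00 : ∑ w ∈ Q00, cnt (if G.Adj u w then s else -s) (if G.Adj v w then s else -s)
        = Q00.card * cnt (-s) (-s) := by
      rw [Finset.sum_congr rfl (fun w hw => ?_), Finset.sum_const, smul_eq_mul]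
      obtain ⟨hw1, hw2⟩ := mem_filter.mp hw
      rw [if_neg (mem_filter.mp hw1).2, if_neg hw2]
    rw [c11, c10, c01, c00]
    ring
  -- cardinality splitting facts
  have hQ11Q10 : Q11.card + Q10.card = (W.filter (fun w => G.Adj u w)).card :=
    Finset.card_filter_add_card_filter_not _
  have hQ01Q00 : Q01.card + Q00.card = (W.filter (fun w => ¬ G.Adj u w)).card :=
    Finset.card_filter_add_card_filter_not _
  have hcomm : ∀ (p q : V → Prop) (_ : DecidablePred p) (_ : DecidablePred q),
      (W.filter p).filter q = (W.filter q).filter p := by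
    intro p q _ _
    ext w
    simp only [mem_filter]
    tauto
  have hQ11Q01 : Q11.card + Q01.card = (W.filter (fun w => G.Adj v w)).card := by
    rw [hQ11, hQ01, hcomm _ _ _ _, hcomm (fun w => ¬ G.Adj u w) _ _ _]
    exact Finset.card_filter_add_card_filter_not _
  have hQ10Q00 : Q10.card + Q00.card = (W.filter (fun w => ¬ G.Adj v w)).card := by
    rw [hQ10, hQ00, hcomm _ _ _ _, hcomm (fun w => ¬ G.Adj u w) _ _ _]
    exact Finset.card_filter_add_card_filter_not _
  -- upper bounds for adjacency counts
  have hadjk : ∀ x : V, (W.filter (fun w => G.Adj x w)).card ≤ k := by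
    intro x
    have hsub : W.filter (fun w => G.Adj x w) ⊆ G.neighborFinset x := by
      intro w hw
      exact SimpleGraph.mem_neighborFinset _ _ _ |>.mpr (mem_filter.mp hw).2
    calc (W.filter (fun w => G.Adj x w)).card ≤ (G.neighborFinset x).card :=
          Finset.card_le_card hsub
      _ = k := by rw [SimpleGraph.card_neighborFinset_eq_degree]; exact hG.regular x
  have hk1n : k + 1 ≤ n := by
    have hx : V := u
    have h1 : (insert u (G.neighborFinset u)).card = k + 1 := by
      rw [Finset.card_insert_of_notMem (SimpleGraph.notMem_neighborFinset_self _ _),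
        SimpleGraph.card_neighborFinset_eq_degree, hG.regular u]
    calc k + 1 = (insert u (G.neighborFinset u)).card := h1.symm
      _ ≤ Fintype.card V := Finset.card_le_univ _
      _ = n := hG.card
  have hnonadj : ∀ x : V, (x = u ∨ x = v) →
      (W.filter (fun w => ¬ G.Adj x w)).card ≤ n - (k + 1) := by
    intro x hx
    have hsub : W.filter (fun w => ¬ G.Adj x w) ⊆ (insert x (G.neighborFinset x))ᶜ := by
      intro w hw
      obtain ⟨hwW, hwa⟩ := mem_filter.mp hw
      obtain ⟨-, hwu, hwv⟩ := mem_filter.mp hwW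
      rw [Finset.mem_compl, Finset.mem_insert]
      rintro (rfl | hmem)
      · rcases hx with rfl | rfl
        · exact hwu rfl
        · exact hwv rfl
      · exact hwa (SimpleGraph.mem_neighborFinset _ _ _ |>.mp hmem)
    calc (W.filter (fun w => ¬ G.Adj x w)).card ≤ ((insert x (G.neighborFinset x))ᶜ).card :=
          Finset.card_le_card hsub
      _ = Fintype.card V - (insert x (G.neighborFinset x)).card := Finset.card_compl _
      _ = n - (k + 1) := by
          rw [hG.card, Finset.card_insert_of_notMem (SimpleGraph.notMem_neighborFinset_self _ _),
            SimpleGraph.card_neighborFinset_eq_degree, hG.regular x]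
  -- the final bound
  have hFq : (F.card : ℚ) ≤ θ * (ζ + α) := by
    by_cases hij : i₀ = j₀
    · -- same column: exact counts
      have hab1 : a.1 ≠ b.1 := by
        intro h
        exact hab (Prod.ext h (by rw [← hi₀, ← hj₀, hij]))
      have huv : u ≠ v := by
        intro h
        apply hab1
        have := congrArg e h
        rwa [hu, hv, Equiv.apply_symm_apply, Equiv.apply_symm_apply] at this
      have hn2 : 2 ≤ n := by
        rw [← hG.card]
        exact Fintype.one_lt_card_iff_nontrivial.mpr ⟨⟨u, v, huv⟩⟩
      have hc10 : cnt s (-s) = 0 := by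
        show (univ.filter fun t : Fin ζ => H i₀ t = s ∧ H j₀ t = -s).card = 0
        rw [Finset.card_eq_zero, Finset.filter_eq_empty_iff]
        rintro t - ⟨e1, e2⟩
        rw [← hij] at e2
        rcases hs1 with rfl | rfl <;> omega
      have hc01 : cnt (-s) s = 0 := by
        show (univ.filter fun t : Fin ζ => H i₀ t = -s ∧ H j₀ t = s).card = 0
        rw [Finset.card_eq_zero, Finset.filter_eq_empty_iff]
        rintro t - ⟨e1, e2⟩
        rw [← hij] at e2
        rcases hs1 with rfl | rfl <;> omega
      have hcζ : cnt s s + cnt (-s) (-s) = ζ := by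
        show (univ.filter fun t : Fin ζ => H i₀ t = s ∧ H j₀ t = s).card
          + (univ.filter fun t : Fin ζ => H i₀ t = -s ∧ H j₀ t = -s).card = ζ
        have h1 : (univ.filter fun t : Fin ζ => H i₀ t = s ∧ H j₀ t = s)
            = univ.filter fun t : Fin ζ => H i₀ t = s :=
          Finset.filter_congr (fun t _ => by rw [← hij]; exact and_self_iff)
        have h2 : (univ.filter fun t : Fin ζ => H i₀ t = -s ∧ H j₀ t = -s)
            = univ.filter fun t : Fin ζ => ¬ (H i₀ t = s) :=
          Finset.filter_congr (fun t _ => by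
            rw [← hij]
            exact ⟨fun h => (hflip _ (hH.1 i₀ t)).mpr h.1, fun h =>
              ⟨(hflip _ (hH.1 i₀ t)).mp h, (hflip _ (hH.1 i₀ t)).mp h⟩⟩)
        rw [h1, h2, Finset.card_filter_add_card_filter_not]
        simp
      have hWcard : W.card = n - 2 := by
        have hWeq : W = (univ.erase u).erase v := by
          ext w
          simp only [hW, mem_filter, mem_univ, true_and, Finset.mem_erase]
          tauto
        rw [hWeq, Finset.card_erase_of_mem (Finset.mem_erase.mpr ⟨huv.symm, mem_univ _⟩),
          Finset.card_erase_of_mem (mem_univ _), Finset.card_univ, hG.card]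
        omega
      have hQsum : Q11.card + Q10.card + Q01.card + Q00.card = W.card := by
        have h3 := Finset.card_filter_add_card_filter_not
          (s := W) (p := fun w => G.Adj u w)
        omega
      have hbridge : ∀ x y : V, (univ.filter (fun w => G.Adj x w ∧ G.Adj y w)).card
          = Fintype.card (G.commonNeighbors x y) := by
        intro x y
        rw [← Set.toFinset_card]
        congr 1
        ext w
        simp [SimpleGraph.mem_commonNeighbors]
      have hQ11eq : Q11 = univ.filter (fun w => G.Adj u w ∧ G.Adj v w) := by
        ext w
        simp only [hQ11, hW, mem_filter, mem_univ, true_and]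
        constructor
        · rintro ⟨⟨⟨h1, h2⟩, h3⟩, h4⟩
          exact ⟨h3, h4⟩
        · rintro ⟨h1, h2⟩
          exact ⟨⟨⟨(G.ne_of_adj h1).symm, (G.ne_of_adj h2).symm⟩, h1⟩, h2⟩
      -- branch on adjacency
      have hkey2 : (Q11.card : ℚ) ≤ θ ∧ (Q00.card : ℚ) ≤ θ := by
        by_cases hAdj : G.Adj u v
        · have hQ11ℓ : Q11.card = ℓ := by
            rw [hQ11eq, hbridge]
            exact hG.of_adj u v hAdj
          have hWuc : (W.filter (fun w => G.Adj u w)).card = k - 1 ∧ 1 ≤ k := by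
            have heq : W.filter (fun w => G.Adj u w) = (G.neighborFinset u).erase v := by
              ext w
              simp only [hW, mem_filter, mem_univ, true_and, Finset.mem_erase,
                SimpleGraph.mem_neighborFinset]
              constructor
              · rintro ⟨⟨h1, h2⟩, h3⟩
                exact ⟨h2, h3⟩
              · rintro ⟨h1, h2⟩
                exact ⟨⟨(G.ne_of_adj h2).symm, h1⟩, h2⟩
            have hmem : v ∈ G.neighborFinset u := (SimpleGraph.mem_neighborFinset _ _ _).mpr hAdj
            have hk1 : 1 ≤ k := by
              have := Finset.card_pos.mpr ⟨v, hmem⟩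
              rwa [SimpleGraph.card_neighborFinset_eq_degree, hG.regular u] at this
            rw [heq, Finset.card_erase_of_mem hmem,
              SimpleGraph.card_neighborFinset_eq_degree, hG.regular u]
            exact ⟨rfl, hk1⟩
          have hWvc : (W.filter (fun w => G.Adj v w)).card = k - 1 := by
            have heq : W.filter (fun w => G.Adj v w) = (G.neighborFinset v).erase u := by
              ext w
              simp only [hW, mem_filter, mem_univ, true_and, Finset.mem_erase,
                SimpleGraph.mem_neighborFinset]
              constructor
              · rintro ⟨⟨h1, h2⟩, h3⟩
                exact ⟨h1, h3⟩
              · rintro ⟨h1, h2⟩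
                exact ⟨⟨h1, (G.ne_of_adj h2).symm⟩, h2⟩
            have hmem : u ∈ G.neighborFinset v := (SimpleGraph.mem_neighborFinset _ _ _).mpr hAdj.symm
            rw [heq, Finset.card_erase_of_mem hmem,
              SimpleGraph.card_neighborFinset_eq_degree, hG.regular v]
          obtain ⟨hWuc1, hk1⟩ := hWuc
          -- rational identities
          have r1 : (Q11.card : ℚ) + Q10.card = (k : ℚ) - 1 := by
            have h0 := hQ11Q10
            rw [hWuc1] at h0
            have hc : ((Q11.card + Q10.card : ℕ) : ℚ) = ((k - 1 : ℕ) : ℚ) := by rw [h0]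
            rw [Nat.cast_sub hk1] at hc
            push_cast at hc
            linarith
          have r2 : (Q11.card : ℚ) + Q01.card = (k : ℚ) - 1 := by
            have h0 := hQ11Q01
            rw [hWvc] at h0
            have hc : ((Q11.card + Q01.card : ℕ) : ℚ) = ((k - 1 : ℕ) : ℚ) := by rw [h0]
            rw [Nat.cast_sub hk1] at hc
            push_cast at hc
            linarith
          have r3 : (Q11.card : ℚ) + Q10.card + Q01.card + Q00.card = (n : ℚ) - 2 := by
            have h0 := hQsum
            rw [hWcard] at h0
            have hc : ((Q11.card + Q10.card + Q01.card + Q00.card : ℕ) : ℚ)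
              = ((n - 2 : ℕ) : ℚ) := by rw [h0]
            rw [Nat.cast_sub hn2] at hc
            push_cast at hc
            linarith
          have r4 : (Q11.card : ℚ) = ℓ := by exact_mod_cast hQ11ℓ
          constructor
          · rw [r4]; exact hθl
          · have : (Q00.card : ℚ) = (n : ℚ) - 2 * k + ℓ := by linarith
            rw [this]; exact hθc2
        · have hQ11μ : Q11.card = μ := by
            rw [hQ11eq, hbridge]
            exact hG.of_not_adj huv hAdj
          have hWuc1 : (W.filter (fun w => G.Adj u w)).card = k := by
            have heq : W.filter (fun w => G.Adj u w) = G.neighborFinset u := by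
              ext w
              simp only [hW, mem_filter, mem_univ, true_and, SimpleGraph.mem_neighborFinset]
              constructor
              · rintro ⟨⟨h1, h2⟩, h3⟩
                exact h3
              · intro h3
                refine ⟨⟨(G.ne_of_adj h3).symm, ?_⟩, h3⟩
                rintro rfl
                exact hAdj h3
            rw [heq, SimpleGraph.card_neighborFinset_eq_degree, hG.regular u]
          have hWvc : (W.filter (fun w => G.Adj v w)).card = k := by
            have heq : W.filter (fun w => G.Adj v w) = G.neighborFinset v := by
              ext w
              simp only [hW, mem_filter, mem_univ, true_and, SimpleGraph.mem_neighborFinset]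
              constructor
              · rintro ⟨⟨h1, h2⟩, h3⟩
                exact h3
              · intro h3
                refine ⟨⟨?_, (G.ne_of_adj h3).symm⟩, h3⟩
                rintro rfl
                exact hAdj h3.symm
            rw [heq, SimpleGraph.card_neighborFinset_eq_degree, hG.regular v]
          have r1 : (Q11.card : ℚ) + Q10.card = (k : ℚ) := by
            have h0 := hQ11Q10
            rw [hWuc1] at h0
            exact_mod_cast h0
          have r2 : (Q11.card : ℚ) + Q01.card = (k : ℚ) := by
            have h0 := hQ11Q01
            rw [hWvc] at h0
            exact_mod_cast h0
          have r3 : (Q11.card : ℚ) + Q10.card + Q01.card + Q00.card = (n : ℚ) - 2 := by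
            have h0 := hQsum
            rw [hWcard] at h0
            have hc : ((Q11.card + Q10.card + Q01.card + Q00.card : ℕ) : ℚ)
              = ((n - 2 : ℕ) : ℚ) := by rw [h0]
            rw [Nat.cast_sub hn2] at hc
            push_cast at hc
            linarith
          have r4 : (Q11.card : ℚ) = μ := by exact_mod_cast hQ11μ
          constructor
          · rw [r4]; exact hθm
          · have : (Q00.card : ℚ) = (n : ℚ) - 2 - 2 * k + μ := by linarith
            rw [this]; exact hθc1
      obtain ⟨hq11θ, hq00θ⟩ := hkey2
      have hF1 : (F.card : ℚ) = (Q11.card : ℚ) * cnt s s + (Q00.card : ℚ) * cnt (-s) (-s) := by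
        rw [hFdec, hc10, hc01]
        push_cast
        ring
      have hAsum : (cnt s s : ℚ) + cnt (-s) (-s) = ζ := by exact_mod_cast hcζ
      calc (F.card : ℚ) = (Q11.card : ℚ) * cnt s s + (Q00.card : ℚ) * cnt (-s) (-s) := hF1
        _ ≤ θ * cnt s s + θ * cnt (-s) (-s) :=
            add_le_add (mul_le_mul_of_nonneg_right hq11θ (Nat.cast_nonneg _))
              (mul_le_mul_of_nonneg_right hq00θ (Nat.cast_nonneg _))
        _ = θ * ((cnt s s : ℚ) + cnt (-s) (-s)) := by ring
        _ = θ * ζ := by rw [hAsum]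
        _ ≤ θ * (ζ + α) := by
            have hα0 : (0:ℚ) ≤ α := Nat.cast_nonneg _
            nlinarith
    · -- different columns: Hadamard bound
      have hPbound := hH.2 i₀ j₀ hij
      set E := (univ.filter fun t : Fin ζ => H i₀ t = H j₀ t) with hE
      set NE := (univ.filter fun t : Fin ζ => ¬ H i₀ t = H j₀ t) with hNE
      have hENE : E.card + NE.card = ζ := by
        rw [hE, hNE, Finset.card_filter_add_card_filter_not]
        simp
      have hmulsum : (H * Hᵀ) i₀ j₀ = (E.card : ℤ) - (NE.card : ℤ) := by
        rw [Matrix.mul_apply]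
        have hpt : ∀ t ∈ (univ : Finset (Fin ζ)),
            H i₀ t * Hᵀ t j₀ = if H i₀ t = H j₀ t then (1:ℤ) else -1 := by
          intro t _
          rw [Matrix.transpose_apply]
          rcases hH.1 i₀ t with h | h <;> rcases hH.1 j₀ t with h' | h' <;>
            rw [h, h'] <;> norm_num
        rw [Finset.sum_congr rfl hpt, Finset.sum_ite, Finset.sum_const, Finset.sum_const,
          nsmul_eq_mul, nsmul_eq_mul]
        push_cast
        ring
      have h2E : 2 * E.card ≤ ζ + α ∧ 2 * NE.card ≤ ζ + α := by
        have h1 := abs_le.mp (hmulsum ▸ hPbound)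
        constructor <;> omega
      have hdisjA : Disjoint (univ.filter fun t : Fin ζ => H i₀ t = s ∧ H j₀ t = s)
          (univ.filter fun t : Fin ζ => H i₀ t = -s ∧ H j₀ t = -s) := by
        rw [Finset.disjoint_left]
        intro t h1 h2
        have e1 := (mem_filter.mp h1).2.1
        have e2 := (mem_filter.mp h2).2.1
        rcases hs1 with rfl | rfl <;> omega
      have hdisjB : Disjoint (univ.filter fun t : Fin ζ => H i₀ t = s ∧ H j₀ t = -s)
          (univ.filter fun t : Fin ζ => H i₀ t = -s ∧ H j₀ t = s) := by
        rw [Finset.disjoint_left]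
        intro t h1 h2
        have e1 := (mem_filter.mp h1).2.1
        have e2 := (mem_filter.mp h2).2.1
        rcases hs1 with rfl | rfl <;> omega
      have hA : cnt s s + cnt (-s) (-s) = E.card := by
        show (univ.filter fun t : Fin ζ => H i₀ t = s ∧ H j₀ t = s).card
          + (univ.filter fun t : Fin ζ => H i₀ t = -s ∧ H j₀ t = -s).card = E.card
        rw [← Finset.card_union_of_disjoint hdisjA, ← Finset.filter_or]
        refine congrArg Finset.card (Finset.filter_congr ?_)
        intro t _
        rcases hH.1 i₀ t with h | h <;> rcases hH.1 j₀ t with h' | h' <;>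
          rcases hs1 with rfl | rfl <;> rw [h, h'] <;> norm_num
      have hB : cnt s (-s) + cnt (-s) s = NE.card := by
        show (univ.filter fun t : Fin ζ => H i₀ t = s ∧ H j₀ t = -s).card
          + (univ.filter fun t : Fin ζ => H i₀ t = -s ∧ H j₀ t = s).card = NE.card
        rw [← Finset.card_union_of_disjoint hdisjB, ← Finset.filter_or]
        refine congrArg Finset.card (Finset.filter_congr ?_)
        intro t _
        rcases hH.1 i₀ t with h | h <;> rcases hH.1 j₀ t with h' | h' <;>
          rcases hs1 with rfl | rfl <;> rw [h, h'] <;> norm_num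
      -- rational versions
      have hAq : (cnt s s : ℚ) + cnt (-s) (-s) ≤ ((ζ : ℚ) + α)/2 := by
        have h := h2E.1
        rw [← hA] at h
        have hc := (Nat.cast_le (α := ℚ)).mpr h
        push_cast at hc
        linarith
      have hBq : (cnt s (-s) : ℚ) + cnt (-s) s ≤ ((ζ : ℚ) + α)/2 := by
        have h := h2E.2
        rw [← hB] at h
        have hc := (Nat.cast_le (α := ℚ)).mpr h
        push_cast at hc
        linarith
      have hq1 : (Q11.card : ℚ) + Q10.card ≤ k := by
        have h := hQ11Q10 ▸ hadjk u
        exact_mod_cast (Nat.cast_le (α := ℚ)).mpr (hQ11Q10 ▸ hadjk u)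
      have hq2 : (Q11.card : ℚ) + Q01.card ≤ k := by
        exact_mod_cast (Nat.cast_le (α := ℚ)).mpr (hQ11Q01 ▸ hadjk v)
      have hq3 : (Q10.card : ℚ) + Q00.card ≤ (n : ℚ) - k - 1 := by
        have h := hQ10Q00 ▸ hnonadj v (Or.inr rfl)
        have hc := (Nat.cast_le (α := ℚ)).mpr h
        push_cast [Nat.cast_sub hk1n] at hc
        linarith
      have hq4 : (Q01.card : ℚ) + Q00.card ≤ (n : ℚ) - k - 1 := by
        have h := hQ01Q00 ▸ hnonadj u (Or.inl rfl)
        have hc := (Nat.cast_le (α := ℚ)).mpr h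
        push_cast [Nat.cast_sub hk1n] at hc
        linarith
      have h2θk : (k : ℚ) ≤ 2*θ := by linarith
      have h2θn : (n : ℚ) - k - 1 ≤ 2*θ := by linarith
      set M1 : ℚ := max (Q11.card : ℚ) (Q00.card : ℚ) with hM1def
      set M2 : ℚ := max (Q10.card : ℚ) (Q01.card : ℚ) with hM2def
      have hM1nn : (0:ℚ) ≤ M1 := le_trans (Nat.cast_nonneg _) (le_max_left _ _)
      have hM2nn : (0:ℚ) ≤ M2 := le_trans (Nat.cast_nonneg _) (le_max_left _ _)
      have hM : M1 + M2 ≤ 2*θ := by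
        rcases max_cases (Q11.card : ℚ) (Q00.card : ℚ) with ⟨e1, f1⟩ | ⟨e1, f1⟩ <;>
          rcases max_cases (Q10.card : ℚ) (Q01.card : ℚ) with ⟨e2, f2⟩ | ⟨e2, f2⟩ <;>
          rw [hM1def, hM2def, e1, e2]
        · linarith [Nat.cast_nonneg (α := ℚ) Q00.card]
        · linarith [Nat.cast_nonneg (α := ℚ) Q10.card]
        · linarith [Nat.cast_nonneg (α := ℚ) Q11.card]
        · linarith [Nat.cast_nonneg (α := ℚ) Q11.card]
      have hF1 : (F.card : ℚ) = (Q11.card : ℚ) * cnt s s + (Q10.card : ℚ) * cnt s (-s)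
          + (Q01.card : ℚ) * cnt (-s) s + (Q00.card : ℚ) * cnt (-s) (-s) := by
        rw [hFdec]
        push_cast
        ring
      calc (F.card : ℚ) = (Q11.card : ℚ) * cnt s s + (Q10.card : ℚ) * cnt s (-s)
          + (Q01.card : ℚ) * cnt (-s) s + (Q00.card : ℚ) * cnt (-s) (-s) := hF1
        _ ≤ M1 * cnt s s + M2 * cnt s (-s) + M2 * cnt (-s) s + M1 * cnt (-s) (-s) := by
            refine add_le_add (add_le_add (add_le_add ?_ ?_) ?_) ?_
            · exact mul_le_mul_of_nonneg_right (le_max_left _ _) (Nat.cast_nonneg _)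
            · exact mul_le_mul_of_nonneg_right (le_max_left _ _) (Nat.cast_nonneg _)
            · exact mul_le_mul_of_nonneg_right (le_max_right _ _) (Nat.cast_nonneg _)
            · exact mul_le_mul_of_nonneg_right (le_max_right _ _) (Nat.cast_nonneg _)
        _ = M1 * ((cnt s s : ℚ) + cnt (-s) (-s)) + M2 * ((cnt s (-s) : ℚ) + cnt (-s) s) := by
            ring
        _ ≤ M1 * (((ζ : ℚ) + α)/2) + M2 * (((ζ : ℚ) + α)/2) :=
            add_le_add (mul_le_mul_of_nonneg_left hAq hM1nn)
              (mul_le_mul_of_nonneg_left hBq hM2nn)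
        _ = (M1 + M2) * (((ζ : ℚ) + α)/2) := by ring
        _ ≤ (2*θ) * (((ζ : ℚ) + α)/2) := by
            refine mul_le_mul_of_nonneg_right hM ?_
            positivity
        _ = θ * (ζ + α) := by ring
  -- contradiction
  have hTFq : (T : ℚ) + 1 ≤ F.card := by exact_mod_cast hTF
  rw [hT] at hTFq
  linarith
end KEY

/-- **Theorem (lower bound for the set multipartite Ramsey number).**
If `G` is a strongly regular graph with parameters `(n,k,ℓ,μ)`, `H` is a symmetric
`[α]`-Hadamard matrix of order `ζ ≥ 2` (with `α ≤ ζ`), and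
`θ = max {k/2, ℓ, μ, (n-k-1)/2, n-2-2k+μ, n-2k+ℓ}` (taken in `ℚ`), then
`n + 1 ≤ M_ζ(K_{2, θ(ζ+α)+1}; 2)`, i.e. there is a 2-coloring of the edges of `K_{n×ζ}`
with no monochromatic copy of `K_{2, θ(ζ+α)+1}`. -/
theorem statement0 {V : Type*} [Fintype V] (G : SimpleGraph V) [DecidableRel G.Adj]
    (n k ℓ μ : ℕ) (hG : G.IsSRGWith n k ℓ μ)
    (ζ α : ℕ) (hζ : 2 ≤ ζ) (hα : α ≤ ζ)
    (H : Matrix (Fin ζ) (Fin ζ) ℤ) (hH : IsBHadamard α H) (hHsymm : H.IsSymm)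
    (θ : ℚ)
    (hθ : θ = max (max (max ((k : ℚ) / 2) (ℓ : ℚ)) (max ((μ : ℚ)) (((n : ℚ) - k - 1) / 2)))
      (max ((n : ℚ) - 2 - 2 * k + μ) ((n : ℚ) - 2 * k + ℓ)))
    (T : ℕ) (hT : (T : ℚ) = θ * (ζ + α)) :
    n + 1 ≤ setRamsey ζ (T + 1) 2 ∧
    ∃ C : (Fin n × Fin ζ) → (Fin n × Fin ζ) → Fin 2,
      (∀ v w, C v w = C w v) ∧ ∀ i : Fin 2, ¬ HasMonoK2 (multiK n ζ) C i (T + 1) := by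
  obtain ⟨C, hCsymm, hCno⟩ := key_coloring G n k ℓ μ hG ζ α hα H hH hHsymm θ hθ T hT
  refine ⟨?_, C, hCsymm, hCno⟩
  have hmem : (8 * (T + 1) + 8) ∈ {c : ℕ | 0 < c ∧ Arrows c ζ (T + 1) 2} :=
    ⟨by omega, arrows_big ζ (T + 1) _ (by omega) (le_refl _)⟩
  apply le_csInf ⟨_, hmem⟩
  intro c hc
  by_contra hlt
  push_neg at hlt
  have hcn : c ≤ n := by omega
  obtain ⟨hc0, hArr⟩ := hc
  obtain ⟨i, hi⟩ := hArr (fun p q => C (Fin.castLE hcn p.1, p.2) (Fin.castLE hcn q.1, q.2))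
    (fun p q => hCsymm _ _)
  exact hCno i (mono_transfer hcn C i (T + 1) hi)
end

section
/- Let G be a strongly regular graph with parameters (n,k,λ,μ), let H be a symmetric [α]-Hadamard matrix of order ζ ≥ 2 (with 0 ≤ α ≤ ζ), and let θ = max{k/2, λ, μ, (n−k−1)/2, n−2−2k+μ, n−2k+λ}. If ζ is even or ⌈(4θα+1)/ζ⌉ − 1 is even, then n+1 ≤ M_ζ(K_{2, θ(ζ+α)+1}; 2) ≤ 4θ + 2 + ⌈(4θα+1)/ζ⌉. -/
open Finset Matrix

section AuxProof
open SimpleGraph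








lemma color_iff {d : Prop} [Decidable d] {e : ℤ} (he : e = 1 ∨ e = -1) {t : Fin 2} {u : ℤ}
    (hu : u = if t = 0 then 1 else -1)
    (h : (if d ↔ e = 1 then (0 : Fin 2) else 1) = t) :
    e = if d then u else -u := by
  fin_cases t <;> rcases he with rfl | rfl <;> by_cases hd : d <;>
    simp_all

lemma pm_not_eq {e u : ℤ} (he : e = 1 ∨ e = -1) (hu : u = 1 ∨ u = -1) :
    ¬ e = u ↔ e = -u := by
  rcases he with rfl | rfl <;> rcases hu with rfl | rfl <;> norm_num

section Cells
variable {ζ α : ℕ} {H : Matrix (Fin ζ) (Fin ζ) ℤ} {u : ℤ} {i0 j0 : Fin ζ}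

lemma row_split (hpm : PMOne H) (hu : u = 1 ∨ u = -1) (i : Fin ζ) (A : Finset (Fin ζ)) :
    (A.filter fun s => H i s = u).card + (A.filter fun s => H i s = -u).card = A.card := by
  classical
  have hng : A.filter (fun a => ¬ H i a = u) = A.filter (fun s => H i s = -u) :=
    Finset.filter_congr (fun s _ => pm_not_eq (hpm i s) hu)
  rw [← hng]
  exact Finset.card_filter_add_card_filter_not (p := fun s => H i s = u)

lemma cell_sum (hpm : PMOne H) (hu : u = 1 ∨ u = -1) :
    ((univ.filter fun s => H i0 s = u ∧ H j0 s = u).card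
    + (univ.filter fun s => H i0 s = u ∧ H j0 s = -u).card)
    + ((univ.filter fun s => H i0 s = -u ∧ H j0 s = u).card
    + (univ.filter fun s => H i0 s = -u ∧ H j0 s = -u).card) = ζ := by
  classical
  have e1 : ∀ (a b : ℤ), (univ.filter fun s => H i0 s = a ∧ H j0 s = b)
      = ((univ.filter fun s => H i0 s = a).filter fun s => H j0 s = b) := by
    intro a b; rw [Finset.filter_filter]
  rw [e1, e1, e1, e1, row_split hpm hu, row_split hpm hu]
  have := row_split hpm hu i0 (univ : Finset (Fin ζ))
  rw [Finset.card_univ, Fintype.card_fin] at this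
  exact this

lemma cell_eq_bound (hpm : PMOne H) (hu : u = 1 ∨ u = -1)
    (hα : |(H * Hᵀ) i0 j0| ≤ (α : ℤ)) :
    2 * (((univ.filter fun s => H i0 s = u ∧ H j0 s = u).card
      + (univ.filter fun s => H i0 s = -u ∧ H j0 s = -u).card : ℤ)) ≤ (ζ : ℤ) + α := by
  classical
  set E := univ.filter fun s : Fin ζ => H i0 s = H j0 s with hE
  have hc1 : (univ.filter fun s => H i0 s = u ∧ H j0 s = u)
      = E.filter fun s => H i0 s = u := by
    rw [hE, Finset.filter_filter]
    apply Finset.filter_congr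
    intro s _
    constructor
    · rintro ⟨h1, h2⟩; exact ⟨h1.trans h2.symm, h1⟩
    · rintro ⟨h1, h2⟩; exact ⟨h2, h1 ▸ h2⟩
  have hc2 : (univ.filter fun s => H i0 s = -u ∧ H j0 s = -u)
      = E.filter fun s => ¬ H i0 s = u := by
    rw [hE, Finset.filter_filter]
    apply Finset.filter_congr
    intro s _
    rw [pm_not_eq (hpm i0 s) hu]
    constructor
    · rintro ⟨h1, h2⟩; exact ⟨h1.trans h2.symm, h1⟩
    · rintro ⟨h1, h2⟩; exact ⟨h2, h1 ▸ h2⟩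
  have hcard : (univ.filter fun s => H i0 s = u ∧ H j0 s = u).card
      + (univ.filter fun s => H i0 s = -u ∧ H j0 s = -u).card = E.card := by
    rw [hc1, hc2]
    exact Finset.card_filter_add_card_filter_not (p := fun s => H i0 s = u)
  have hsum : (H * Hᵀ) i0 j0 = (E.card : ℤ)
      - ((univ.filter fun s : Fin ζ => ¬ H i0 s = H j0 s).card : ℤ) := by
    rw [Matrix.mul_apply]
    simp only [Matrix.transpose_apply]
    rw [← Finset.sum_filter_add_sum_filter_not univ (fun s : Fin ζ => H i0 s = H j0 s)]
    have hA : ∑ s ∈ E, H i0 s * H j0 s = (E.card : ℤ) := by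
      rw [Finset.sum_congr rfl (g := fun _ => (1 : ℤ)) ?_, Finset.sum_const, nsmul_eq_mul, mul_one]
      intro s hs
      have h1 := (Finset.mem_filter.mp hs).2
      rcases hpm j0 s with h2 | h2 <;> rw [h1, h2] <;> norm_num
    have hB : ∑ s ∈ univ.filter (fun s : Fin ζ => ¬ H i0 s = H j0 s), H i0 s * H j0 s
        = -(((univ.filter fun s : Fin ζ => ¬ H i0 s = H j0 s).card : ℤ)) := by
      rw [Finset.sum_congr rfl (g := fun _ => (-1 : ℤ)) ?_, Finset.sum_const, nsmul_eq_mul]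
      · ring
      intro s hs
      have h1 := (Finset.mem_filter.mp hs).2
      rcases hpm i0 s with h2 | h2 <;> rcases hpm j0 s with h3 | h3 <;>
        simp [h2, h3] at h1 ⊢
    rw [hA, hB]
    ring
  have htot : E.card + (univ.filter fun s : Fin ζ => ¬ H i0 s = H j0 s).card = ζ := by
    rw [hE]
    have := Finset.card_filter_add_card_filter_not
      (s := (univ : Finset (Fin ζ))) (p := fun s => H i0 s = H j0 s)
    rw [Finset.card_univ, Fintype.card_fin] at this
    exact this
  have habs := abs_le.mp hα
  have hcast : ((univ.filter fun s => H i0 s = u ∧ H j0 s = u).card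
      + ((univ.filter fun s => H i0 s = -u ∧ H j0 s = -u).card) : ℤ) = (E.card : ℤ) := by
    exact_mod_cast congrArg (Nat.cast : ℕ → ℤ) hcard
  rw [hcast]
  have htot' : (E.card : ℤ) + ((univ.filter fun s : Fin ζ => ¬ H i0 s = H j0 s).card : ℤ) = ζ := by
    exact_mod_cast congrArg (Nat.cast : ℕ → ℤ) htot
  omega

end Cells


section SRGArith

variable {V : Type*} [Fintype V] {G : SimpleGraph V} [DecidableRel G.Adj] {n k ℓ μ : ℕ}

lemma srg_l_lt_k (hG : G.IsSRGWith n k ℓ μ) {x y : V} (hxy : G.Adj x y) : ℓ < k := by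
  have h := hxy.card_commonNeighbors_lt_degree
  rwa [hG.of_adj x y hxy, hG.regular x] at h

lemma srg_k_lt_n (hG : G.IsSRGWith n k ℓ μ) (x : V) : k < n := by
  have h := G.degree_lt_card_verts x
  rwa [hG.regular x, hG.card] at h

lemma srg_mu_le_k (hG : G.IsSRGWith n k ℓ μ) {x y : V} (hxy : x ≠ y) (hna : ¬ G.Adj x y) :
    μ ≤ k := by
  have h := G.card_commonNeighbors_le_degree_left x y
  rwa [hG.of_not_adj hxy hna, hG.regular x] at h

lemma srg_ident (hG : G.IsSRGWith n k ℓ μ) {x y : V} (hxy : G.Adj x y) :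
    (k : ℤ) * ((k : ℤ) - ℓ - 1) = ((n : ℤ) - k - 1) * μ := by
  have hkn : k < n := srg_k_lt_n hG x
  have hlk : ℓ < k := srg_l_lt_k hG hxy
  have hn : 0 < n := lt_of_le_of_lt (Nat.zero_le _) hkn
  have hid := SimpleGraph.IsSRGWith.param_eq G hG hn
  have e1 : ((k - ℓ - 1 : ℕ) : ℤ) = (k : ℤ) - ℓ - 1 := by omega
  have e2 : ((n - k - 1 : ℕ) : ℤ) = (n : ℤ) - k - 1 := by omega
  rw [← e1, ← e2, ← Nat.cast_mul, ← Nat.cast_mul, hid]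

/-- For a nonadjacent pair, `n ≥ 2k - μ + 2`. -/
lemma srg_n_ge (hG : G.IsSRGWith n k ℓ μ) {x y : V} (hxy : x ≠ y) (hna : ¬ G.Adj x y) :
    2 * k - μ + 2 ≤ n := by
  classical
  have hu := hG.card_neighborFinset_union_of_not_adj hxy hna
  have hxmem : x ∉ G.neighborFinset x ∪ G.neighborFinset y := by
    simp [mem_neighborFinset, G.adj_comm y x, hna]
  have hymem : y ∉ insert x (G.neighborFinset x ∪ G.neighborFinset y) := by
    simp [mem_neighborFinset, hna, hxy.symm, G.adj_comm x y]
  have hle : (insert y (insert x (G.neighborFinset x ∪ G.neighborFinset y))).card ≤ n := by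
    rw [← hG.card, ← Finset.card_univ]
    exact Finset.card_le_card (Finset.subset_univ _)
  rw [Finset.card_insert_of_notMem hymem, Finset.card_insert_of_notMem hxmem, hu] at hle
  omega

lemma lemA (hG : G.IsSRGWith n k ℓ μ) {x y : V} (hxy : x ≠ y) (hna : ¬ G.Adj x y)
    {θ : ℚ} (h1 : (k : ℚ) / 2 ≤ θ) (h2 : (ℓ : ℚ) ≤ θ) (h6 : (n : ℚ) - 2 * k + ℓ ≤ θ) :
    (k : ℚ) - μ ≤ θ := by
  by_cases hk2 : (k : ℚ) ≤ 2 * μ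
  · linarith
  push_neg at hk2
  have hμk : 2 * μ < k := by exact_mod_cast hk2
  have hk1 : 1 ≤ k := by omega
  -- there is an edge at x
  obtain ⟨w, hw⟩ : ∃ w, G.Adj x w := by
    have hcard : 0 < (G.neighborFinset x).card := by
      rw [card_neighborFinset_eq_degree, hG.regular x]; omega
    obtain ⟨w, hw⟩ := Finset.card_pos.mp hcard
    exact ⟨w, (mem_neighborFinset _ _ _).mp hw⟩
  have hlk : ℓ < k := srg_l_lt_k hG hw
  have hkn : k < n := srg_k_lt_n hG x
  have hid := srg_ident hG hw
  by_cases hcase : (k : ℤ) - μ ≤ (ℓ : ℤ)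
  · have : (k : ℚ) - μ ≤ (ℓ : ℚ) := by exact_mod_cast hcase
    linarith
  push_neg at hcase
  have hd : (μ : ℤ) ≤ (k : ℤ) - 1 - ℓ := by omega
  by_cases hμ0 : μ = 0
  · subst hμ0
    have hd0 : (k : ℤ) - ℓ - 1 = 0 := by
      rcases (by simpa using hid : k = 0 ∨ (k : ℤ) - ℓ - 1 = 0) with h | h
      · omega
      · exact h
    have hn2 := srg_n_ge hG hxy hna
    have hn2' : 2 * k + 2 ≤ n := by omega
    have hq : (k : ℚ) ≤ (n : ℚ) - 2 * k + ℓ := by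
      have hz : (k : ℤ) ≤ (n : ℤ) - 2 * k + ℓ := by omega
      exact_mod_cast hz
    push_cast
    linarith
  · have hμ1 : 1 ≤ (μ : ℤ) := by exact_mod_cast Nat.one_le_iff_ne_zero.mpr hμ0
    have hfac : 0 ≤ ((k : ℤ) - μ) * (((k : ℤ) - 1 - ℓ) - μ) := by
      apply mul_nonneg <;> omega
    have h7 : (2 * k - 1 - ℓ - μ : ℤ) * μ ≤ ((n : ℤ) - k - 1) * μ := by nlinarith
    have h8 : (2 * k - 1 - ℓ - μ : ℤ) ≤ (n : ℤ) - k - 1 :=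
      le_of_mul_le_mul_right h7 (by omega)
    have : (k : ℚ) - μ ≤ (n : ℚ) - 2 * k + ℓ := by
      have : (k : ℤ) - μ ≤ (n : ℤ) - 2 * k + ℓ := by omega
      exact_mod_cast this
    linarith

end SRGArith

section B
variable {V : Type*} [Fintype V] {G : SimpleGraph V} [DecidableRel G.Adj] {n k ℓ μ : ℕ}

lemma lemB (hG : G.IsSRGWith n k ℓ μ) {x y : V} (ha : G.Adj x y)
    {θ : ℚ} (h1 : (k : ℚ) / 2 ≤ θ) (h3 : (μ : ℚ) ≤ θ)
    (h5 : (n : ℚ) - 2 - 2 * k + μ ≤ θ) :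
    (k : ℚ) - 1 - ℓ ≤ θ := by
  by_cases hk2 : (k : ℚ) ≤ 2 * ℓ + 2
  · linarith
  push_neg at hk2
  have hlk2 : 2 * ℓ + 3 ≤ k := by
    have : (2 * ℓ + 2 : ℕ) < k := by exact_mod_cast (by push_cast; linarith : ((2 * ℓ + 2 : ℕ) : ℚ) < k)
    omega
  by_cases hcase : (k : ℤ) - 1 - ℓ ≤ (μ : ℤ)
  · have : (k : ℚ) - 1 - ℓ ≤ (μ : ℚ) := by exact_mod_cast hcase
    linarith
  push_neg at hcase
  have hlk : ℓ < k := srg_l_lt_k hG ha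
  have hkn : k < n := srg_k_lt_n hG x
  have hid : (k : ℤ) * ((k : ℤ) - ℓ - 1) = ((n : ℤ) - k - 1) * μ := srg_ident hG ha
  have hμ1 : 1 ≤ (μ : ℤ) := by
    rcases Nat.eq_zero_or_pos μ with h0 | h0
    · exfalso
      subst h0
      have : (k : ℤ) * ((k : ℤ) - ℓ - 1) = 0 := by simpa using hid
      rcases mul_eq_zero.mp this with h | h <;> omega
    · exact_mod_cast h0
  have hfac : 1 ≤ ((k : ℤ) - μ) * (((k : ℤ) - 1 - ℓ) - μ) := by
    have e1 : 1 ≤ (k : ℤ) - μ := by omega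
    have e2 : 1 ≤ ((k : ℤ) - 1 - ℓ) - μ := by omega
    nlinarith
  have h7 : ((k : ℤ) + (k - 1 - ℓ) - μ) * μ < ((n : ℤ) - k - 1) * μ := by nlinarith
  have h8 : ((k : ℤ) + (k - 1 - ℓ) - μ) < (n : ℤ) - k - 1 :=
    lt_of_mul_lt_mul_right h7 (by omega)
  have : (k : ℚ) - 1 - ℓ ≤ (n : ℚ) - 2 - 2 * k + μ := by
    have hz : (k : ℤ) - 1 - ℓ ≤ (n : ℤ) - 2 - 2 * k + μ := by omega
    exact_mod_cast hz
  linarith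
end B

section ClassBounds
variable {V : Type*} [Fintype V] [DecidableEq V] {G : SimpleGraph V} [DecidableRel G.Adj]
  {n k ℓ μ : ℕ}

lemma common_filter_eq (x y : V) :
    (univ.filter fun v => G.Adj x v ∧ G.Adj y v) = G.neighborFinset x ∩ G.neighborFinset y := by
  ext v
  simp [mem_neighborFinset]

lemma card_common_adj (hG : G.IsSRGWith n k ℓ μ) {x y : V} (ha : G.Adj x y) :
    (univ.filter fun v => G.Adj x v ∧ G.Adj y v).card = ℓ := by
  rw [← hG.of_adj x y ha]
  exact (Fintype.card_of_finset' _ (fun a => by simp [mem_commonNeighbors])).symm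

lemma card_common_nonadj (hG : G.IsSRGWith n k ℓ μ) {x y : V} (hne : x ≠ y)
    (hna : ¬ G.Adj x y) :
    (univ.filter fun v => G.Adj x v ∧ G.Adj y v).card = μ := by
  rw [← hG.of_not_adj hne hna]
  exact (Fintype.card_of_finset' _ (fun a => by simp [mem_commonNeighbors])).symm

lemma cross_bound (hG : G.IsSRGWith n k ℓ μ) {x y : V} (hne : x ≠ y)
    {θ : ℚ} (h1 : (k : ℚ) / 2 ≤ θ) (h2 : (ℓ : ℚ) ≤ θ) (h3 : (μ : ℚ) ≤ θ)
    (h5 : (n : ℚ) - 2 - 2 * k + μ ≤ θ) (h6 : (n : ℚ) - 2 * k + ℓ ≤ θ) :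
    ((univ.filter fun v => G.Adj x v ∧ ¬ G.Adj y v ∧ v ≠ y).card : ℚ) ≤ θ := by
  classical
  set Ts := univ.filter fun v => G.Adj x v ∧ ¬ G.Adj y v ∧ v ≠ y with hTs
  set Cm := univ.filter fun v => G.Adj x v ∧ G.Adj y v with hCm
  have hd1 : Disjoint Ts Cm := by
    rw [Finset.disjoint_left]
    intro v hv hv'
    rw [hTs, mem_filter] at hv
    rw [hCm, mem_filter] at hv'
    exact hv.2.2.1 hv'.2.2
  by_cases ha : G.Adj x y
  · have hd2 : Disjoint (Ts ∪ Cm) {y} := by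
      rw [Finset.disjoint_right]
      intro v hv hv'
      rw [Finset.mem_singleton] at hv
      rcases Finset.mem_union.mp hv' with h | h
      · rw [hTs, mem_filter] at h
        exact h.2.2.2 hv
      · rw [hCm, mem_filter] at h
        exact G.loopless.irrefl y (hv ▸ h.2.2)
    have hsub : (Ts ∪ Cm) ∪ {y} ⊆ G.neighborFinset x := by
      intro v hv
      rw [mem_neighborFinset]
      rcases Finset.mem_union.mp hv with h | h
      · rcases Finset.mem_union.mp h with h' | h'
        · exact ((mem_filter.mp h').2).1
        · exact ((mem_filter.mp h').2).1
      · rw [Finset.mem_singleton] at h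
        subst h
        exact ha
    have hcards : Ts.card + ℓ + 1 ≤ k := by
      have h0 := Finset.card_le_card hsub
      rw [Finset.card_union_of_disjoint hd2, Finset.card_union_of_disjoint hd1,
        Finset.card_singleton, card_neighborFinset_eq_degree, hG.regular x,
        card_common_adj hG ha] at h0
      omega
    have : (Ts.card : ℚ) ≤ (k : ℚ) - 1 - ℓ := by
      have : ((Ts.card + ℓ + 1 : ℕ) : ℚ) ≤ k := by exact_mod_cast hcards
      push_cast at this
      linarith
    linarith [lemB hG ha h1 h3 h5]
  · have hsub : Ts ∪ Cm ⊆ G.neighborFinset x := by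
      intro v hv
      rw [mem_neighborFinset]
      rcases Finset.mem_union.mp hv with h | h
      · exact ((mem_filter.mp h).2).1
      · exact ((mem_filter.mp h).2).1
    have hcards : Ts.card + μ ≤ k := by
      have h0 := Finset.card_le_card hsub
      rw [Finset.card_union_of_disjoint hd1, card_neighborFinset_eq_degree, hG.regular x,
        card_common_nonadj hG hne ha] at h0
      omega
    have : (Ts.card : ℚ) ≤ (k : ℚ) - μ := by
      have : ((Ts.card + μ : ℕ) : ℚ) ≤ k := by exact_mod_cast hcards
      push_cast at this
      linarith
    linarith [lemA hG hne ha h1 h2 h6]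

lemma nn_bound (hG : G.IsSRGWith n k ℓ μ) {x y : V} (hne : x ≠ y)
    {θ : ℚ} (h5 : (n : ℚ) - 2 - 2 * k + μ ≤ θ) (h6 : (n : ℚ) - 2 * k + ℓ ≤ θ) :
    ((univ.filter fun v => v ≠ x ∧ v ≠ y ∧ ¬ G.Adj x v ∧ ¬ G.Adj y v).card : ℚ) ≤ θ := by
  classical
  set NN := univ.filter fun v => v ≠ x ∧ v ≠ y ∧ ¬ G.Adj x v ∧ ¬ G.Adj y v with hNN
  set W := G.neighborFinset x ∪ G.neighborFinset y with hW
  have hdisj : Disjoint NN W := by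
    rw [Finset.disjoint_left]
    intro v hv hv'
    rw [hNN, mem_filter] at hv
    rcases Finset.mem_union.mp hv' with h | h
    · exact hv.2.2.2.1 ((mem_neighborFinset _ _ _).mp h)
    · exact hv.2.2.2.2 ((mem_neighborFinset _ _ _).mp h)
  have hWcard : W.card + (univ.filter fun v => G.Adj x v ∧ G.Adj y v).card = 2 * k := by
    rw [common_filter_eq, hW, Finset.card_union_add_card_inter,
      card_neighborFinset_eq_degree, card_neighborFinset_eq_degree, hG.regular x, hG.regular y]
    ring
  have hn : Fintype.card V = n := hG.card
  by_cases ha : G.Adj x y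
  · have hcards : NN.card + W.card ≤ n := by
      have h0 := Finset.card_le_card (Finset.subset_univ (NN ∪ W))
      rw [Finset.card_union_of_disjoint hdisj, Finset.card_univ, hn] at h0
      exact h0
    rw [card_common_adj hG ha] at hWcard
    have : (NN.card : ℚ) ≤ (n : ℚ) - 2 * k + ℓ := by
      have c1 : ((NN.card + W.card : ℕ) : ℚ) ≤ n := by exact_mod_cast hcards
      have c2 : ((W.card + ℓ : ℕ) : ℚ) = 2 * k := by exact_mod_cast hWcard
      push_cast at c1 c2
      linarith
    linarith
  · have hxW : x ∉ W := by
      rw [hW]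
      simp only [Finset.mem_union, mem_neighborFinset]
      push_neg
      exact ⟨G.loopless.irrefl x, fun h => ha (h.symm)⟩
    have hyW : y ∉ insert x W := by
      simp only [Finset.mem_insert, hW, Finset.mem_union, mem_neighborFinset]
      push_neg
      exact ⟨hne.symm, fun h => ha h, G.loopless.irrefl y⟩
    have hdisj2 : Disjoint NN (insert y (insert x W)) := by
      rw [Finset.disjoint_right]
      intro v hv hv'
      rw [hNN, mem_filter] at hv'
      rcases Finset.mem_insert.mp hv with h | h
      · exact hv'.2.2.1 h
      rcases Finset.mem_insert.mp h with h' | h'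
      · exact hv'.2.1 h'
      · exact (Finset.disjoint_left.mp hdisj) (by rw [hNN, mem_filter]; exact hv') h'
    have hcards : NN.card + (W.card + 2) ≤ n := by
      have h0 := Finset.card_le_card (Finset.subset_univ (NN ∪ insert y (insert x W)))
      rw [Finset.card_union_of_disjoint hdisj2, Finset.card_insert_of_notMem hyW,
        Finset.card_insert_of_notMem hxW, Finset.card_univ, hn] at h0
      omega
    rw [card_common_nonadj hG hne ha] at hWcard
    have : (NN.card : ℚ) ≤ (n : ℚ) - 2 - 2 * k + μ := by
      have c1 : ((NN.card + (W.card + 2) : ℕ) : ℚ) ≤ n := by exact_mod_cast hcards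
      have c2 : ((W.card + μ : ℕ) : ℚ) = 2 * k := by exact_mod_cast hWcard
      push_cast at c1 c2
      linarith
    linarith

lemma samepart_bound (hG : G.IsSRGWith n k ℓ μ) (x : V) :
    ((univ.filter fun v => v ≠ x ∧ ¬ G.Adj x v).card : ℚ) ≤ (n : ℚ) - 1 - k := by
  classical
  set NN := univ.filter fun v => v ≠ x ∧ ¬ G.Adj x v with hNN
  have hdisj : Disjoint NN (insert x (G.neighborFinset x)) := by
    rw [Finset.disjoint_right]
    intro v hv hv'
    rw [hNN, mem_filter] at hv'
    rcases Finset.mem_insert.mp hv with h | h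
    · exact hv'.2.1 h
    · exact hv'.2.2 ((mem_neighborFinset _ _ _).mp h)
  have hxmem : x ∉ G.neighborFinset x := by
    simp [mem_neighborFinset]
  have hcards : NN.card + (k + 1) ≤ n := by
    have h0 := Finset.card_le_card (Finset.subset_univ (NN ∪ insert x (G.neighborFinset x)))
    rw [Finset.card_union_of_disjoint hdisj, Finset.card_insert_of_notMem hxmem,
      card_neighborFinset_eq_degree, hG.regular x, Finset.card_univ, hG.card] at h0
    omega
  have c1 : ((NN.card + (k + 1) : ℕ) : ℚ) ≤ n := by exact_mod_cast hcards
  push_cast at c1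
  linarith

end ClassBounds
section NoArrows

variable {V : Type*} [Fintype V] {G : SimpleGraph V} [DecidableRel G.Adj] {n k ℓ μ : ℕ}

set_option maxHeartbeats 2000000 in
lemma noArrows (hG : G.IsSRGWith n k ℓ μ)
    {ζ α : ℕ} {H : Matrix (Fin ζ) (Fin ζ) ℤ} (hH : IsBHadamard α H) (hsym : H.IsSymm)
    {θ : ℚ} (h1 : (k : ℚ) / 2 ≤ θ) (h2 : (ℓ : ℚ) ≤ θ) (h3 : (μ : ℚ) ≤ θ)
    (h4 : ((n : ℚ) - k - 1) / 2 ≤ θ) (h5 : (n : ℚ) - 2 - 2 * k + μ ≤ θ)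
    (h6 : (n : ℚ) - 2 * k + ℓ ≤ θ)
    {T : ℕ} (hT : (T : ℚ) = θ * (ζ + α)) {c : ℕ} (hc : c ≤ n) :
    ¬ Arrows c ζ (T + 1) 2 := by
  classical
  have hθ0 : 0 ≤ θ := le_trans (by positivity) h1
  intro harr
  obtain ⟨f⟩ : Nonempty (Fin c ↪ V) := by
    apply Function.Embedding.nonempty_of_card_le
    rw [Fintype.card_fin, hG.card]
    exact hc
  set C : (Fin c × Fin ζ) → (Fin c × Fin ζ) → Fin 2 :=
    fun v w => if G.Adj (f v.1) (f w.1) ↔ H v.2 w.2 = 1 then 0 else 1 with hCdef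
  have hCsym : ∀ v w, C v w = C w v := by
    intro v w
    have e2 : H w.2 v.2 = H v.2 w.2 := hsym.apply v.2 w.2
    by_cases hcond : G.Adj (f v.1) (f w.1) ↔ H v.2 w.2 = 1
    · have hcond' : G.Adj (f w.1) (f v.1) ↔ H w.2 v.2 = 1 := by
        rw [G.adj_comm, e2]; exact hcond
      simp only [hCdef, if_pos hcond, if_pos hcond']
    · have hcond' : ¬ (G.Adj (f w.1) (f v.1) ↔ H w.2 v.2 = 1) := by
        rw [G.adj_comm, e2]; exact hcond
      simp only [hCdef, if_neg hcond, if_neg hcond']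
  obtain ⟨t, a, b, S, hab, haS, hbS, hScard, hSmem⟩ := harr C hCsym
  set x := a.1 with hx
  set i0 := a.2 with hi0
  set y := b.1 with hy
  set j0 := b.2 with hj0
  set u : ℤ := if t = 0 then 1 else -1 with hu
  have hupm : u = 1 ∨ u = -1 := by
    rw [hu]; split_ifs <;> simp
  -- key membership facts
  have key : ∀ v ∈ S, v.1 ≠ x ∧ v.1 ≠ y ∧
      H i0 v.2 = (if G.Adj (f x) (f v.1) then u else -u) ∧
      H j0 v.2 = (if G.Adj (f y) (f v.1) then u else -u) := by
    intro v hv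
    obtain ⟨hadj1, hadj2, hc1, hc2⟩ := hSmem v hv
    have hne1 : v.1 ≠ x := fun h => (hadj1 : a.1 ≠ v.1) h.symm
    have hne2 : v.1 ≠ y := fun h => (hadj2 : b.1 ≠ v.1) h.symm
    refine ⟨hne1, hne2, ?_, ?_⟩
    · exact color_iff (hH.1 i0 v.2) hu hc1
    · exact color_iff (hH.1 j0 v.2) hu hc2
  -- cells
  set cell : ℤ → ℤ → Finset (Fin ζ) :=
    fun e1 e2 => univ.filter (fun s => H i0 s = e1 ∧ H j0 s = e2) with hcell
  set e1 : Fin c → ℤ := fun w => if G.Adj (f x) (f w) then u else -u with he1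
  set e2 : Fin c → ℤ := fun w => if G.Adj (f y) (f w) then u else -u with he2
  -- fiberwise bound
  have hfib_le : ∀ w : Fin c,
      (S.filter fun v => v.1 = w).card ≤ (cell (e1 w) (e2 w)).card := by
    intro w
    apply Finset.card_le_card_of_injOn (fun v => v.2)
    · intro v hv
      rw [Finset.mem_coe, Finset.mem_filter] at hv
      obtain ⟨hvS, hv1⟩ := hv
      obtain ⟨_, _, k1, k2⟩ := key v hvS
      rw [hv1] at k1 k2
      simp only [Finset.mem_coe, hcell, Finset.mem_filter]
      exact ⟨Finset.mem_univ _, k1, k2⟩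
    · intro v hv v' hv' hvv
      rw [Finset.mem_coe, Finset.mem_filter] at hv hv'
      exact Prod.ext (hv.2.trans hv'.2.symm) hvv
  have hfibsum : S.card = ∑ w : Fin c, (S.filter fun v => v.1 = w).card :=
    Finset.card_eq_sum_card_fiberwise (fun v _ => Finset.mem_univ v.1)
  set U := (univ : Finset (Fin c)).filter (fun w => ¬ (w = x ∨ w = y)) with hU
  have hzero : ∀ w ∈ (univ : Finset (Fin c)).filter (fun w => w = x ∨ w = y),
      (S.filter fun v => v.1 = w).card = 0 := by
    intro w hw
    rw [Finset.card_eq_zero, Finset.eq_empty_iff_forall_notMem]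
    intro v hv
    rw [Finset.mem_filter] at hv hw
    obtain ⟨hne1, hne2, _, _⟩ := key v hv.1
    rcases hw.2 with rfl | rfl
    · exact hne1 hv.2
    · exact hne2 hv.2
  have hstep1 : S.card ≤ ∑ w ∈ U, (cell (e1 w) (e2 w)).card := by
    calc S.card = ∑ w : Fin c, (S.filter fun v => v.1 = w).card := hfibsum
      _ = (∑ w ∈ (univ : Finset (Fin c)).filter (fun w => w = x ∨ w = y),
            (S.filter fun v => v.1 = w).card)
          + ∑ w ∈ U, (S.filter fun v => v.1 = w).card :=
            (Finset.sum_filter_add_sum_filter_not univ _ _).symm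
      _ = ∑ w ∈ U, (S.filter fun v => v.1 = w).card := by
            rw [Finset.sum_eq_zero hzero, zero_add]
      _ ≤ ∑ w ∈ U, (cell (e1 w) (e2 w)).card :=
            Finset.sum_le_sum (fun w _ => hfib_le w)
  -- split into the four classes
  set K11 := (U.filter (fun w => G.Adj (f x) (f w))).filter (fun w => G.Adj (f y) (f w)) with hK11d
  set K10 := (U.filter (fun w => G.Adj (f x) (f w))).filter (fun w => ¬ G.Adj (f y) (f w)) with hK10d
  set K01 := (U.filter (fun w => ¬ G.Adj (f x) (f w))).filter (fun w => G.Adj (f y) (f w)) with hK01d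
  set K00 := (U.filter (fun w => ¬ G.Adj (f x) (f w))).filter (fun w => ¬ G.Adj (f y) (f w)) with hK00d
  have hconst : ∀ (W : Finset (Fin c)) (b1 b2 : Bool),
      (∀ w ∈ W, (G.Adj (f x) (f w) ↔ b1 = true) ∧ (G.Adj (f y) (f w) ↔ b2 = true)) →
      ∑ w ∈ W, (cell (e1 w) (e2 w)).card
        = W.card * (cell (if b1 then u else -u) (if b2 then u else -u)).card := by
    intro W b1 b2 hW
    rw [Finset.sum_congr rfl
      (g := fun _ => (cell (if b1 then u else -u) (if b2 then u else -u)).card) ?_]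
    · rw [Finset.sum_const, smul_eq_mul]
    intro w hw
    obtain ⟨c1, c2⟩ := hW w hw
    have : e1 w = (if b1 then u else -u) := by
      rw [he1]
      cases b1 <;> simp_all
    rw [this]
    have : e2 w = (if b2 then u else -u) := by
      rw [he2]
      cases b2 <;> simp_all
    rw [this]
  have hstep2 : ∑ w ∈ U, (cell (e1 w) (e2 w)).card
      = K11.card * (cell u u).card + K10.card * (cell u (-u)).card
      + (K01.card * (cell (-u) u).card + K00.card * (cell (-u) (-u)).card) := by
    rw [← Finset.sum_filter_add_sum_filter_not U (fun w => G.Adj (f x) (f w))]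
    congr 1
    · rw [← Finset.sum_filter_add_sum_filter_not (U.filter (fun w => G.Adj (f x) (f w)))
        (fun w => G.Adj (f y) (f w))]
      congr 1
      · have := hconst K11 true true ?_
        · simpa using this
        intro w hw
        rw [hK11d, Finset.mem_filter, Finset.mem_filter] at hw
        simp [hw.1.2, hw.2]
      · have := hconst K10 true false ?_
        · simpa using this
        intro w hw
        rw [hK10d, Finset.mem_filter, Finset.mem_filter] at hw
        simp [hw.1.2, hw.2]
    · rw [← Finset.sum_filter_add_sum_filter_not (U.filter (fun w => ¬ G.Adj (f x) (f w)))
        (fun w => G.Adj (f y) (f w))]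
      congr 1
      · have := hconst K01 false true ?_
        · simpa using this
        intro w hw
        rw [hK01d, Finset.mem_filter, Finset.mem_filter] at hw
        simp [hw.1.2, hw.2]
      · have := hconst K00 false false ?_
        · simpa using this
        intro w hw
        rw [hK00d, Finset.mem_filter, Finset.mem_filter] at hw
        simp [hw.1.2, hw.2]
  have hmain : S.card ≤ K11.card * (cell u u).card + K10.card * (cell u (-u)).card
      + (K01.card * (cell (-u) u).card + K00.card * (cell (-u) (-u)).card) :=
    hstep2 ▸ hstep1
  -- class bounds via the embedding
  have hinj : Set.InjOn f ↑((univ : Finset (Fin c))) := f.injective.injOn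
  have hK11V : K11.card ≤ ((univ : Finset V).filter fun v =>
      G.Adj (f x) v ∧ G.Adj (f y) v).card := by
    apply Finset.card_le_card_of_injOn f
    · intro w hw
      rw [hK11d, Finset.mem_coe, Finset.mem_filter, Finset.mem_filter] at hw
      exact Finset.mem_filter.mpr ⟨Finset.mem_univ _, hw.1.2, hw.2⟩
    · exact f.injective.injOn
  have hK10V : K10.card ≤ ((univ : Finset V).filter fun v =>
      G.Adj (f x) v ∧ ¬ G.Adj (f y) v ∧ v ≠ f y).card := by
    apply Finset.card_le_card_of_injOn f
    · intro w hw
      rw [hK10d, Finset.mem_coe, Finset.mem_filter, Finset.mem_filter, hU, Finset.mem_filter] at hw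
      have hwy : w ≠ y := fun h => hw.1.1.2 (Or.inr h)
      exact Finset.mem_filter.mpr ⟨Finset.mem_univ _, hw.1.2, hw.2, f.injective.ne hwy⟩
    · exact f.injective.injOn
  have hK01V : K01.card ≤ ((univ : Finset V).filter fun v =>
      G.Adj (f y) v ∧ ¬ G.Adj (f x) v ∧ v ≠ f x).card := by
    apply Finset.card_le_card_of_injOn f
    · intro w hw
      rw [hK01d, Finset.mem_coe, Finset.mem_filter, Finset.mem_filter, hU, Finset.mem_filter] at hw
      have hwx : w ≠ x := fun h => hw.1.1.2 (Or.inl h)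
      exact Finset.mem_filter.mpr ⟨Finset.mem_univ _, hw.2, hw.1.2, f.injective.ne hwx⟩
    · exact f.injective.injOn
  have hK00V : K00.card ≤ ((univ : Finset V).filter fun v =>
      v ≠ f x ∧ v ≠ f y ∧ ¬ G.Adj (f x) v ∧ ¬ G.Adj (f y) v).card := by
    apply Finset.card_le_card_of_injOn f
    · intro w hw
      rw [hK00d, Finset.mem_coe, Finset.mem_filter, Finset.mem_filter, hU, Finset.mem_filter] at hw
      have hwx : w ≠ x := fun h => hw.1.1.2 (Or.inl h)
      have hwy : w ≠ y := fun h => hw.1.1.2 (Or.inr h)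
      exact Finset.mem_filter.mpr ⟨Finset.mem_univ _, f.injective.ne hwx, f.injective.ne hwy,
        hw.1.2, hw.2⟩
    · exact f.injective.injOn
  have hfinal : (S.card : ℚ) ≤ (T : ℚ) := by
    rw [hT]
    by_cases hxy : x = y
    · -- same part: i0 ≠ j0
      have hij : i0 ≠ j0 := by
        intro h
        exact hab (Prod.ext hxy h)
      have hK10z : K10.card = 0 := by
        rw [Finset.card_eq_zero, Finset.eq_empty_iff_forall_notMem]
        intro w hw
        rw [hK10d, Finset.mem_filter, Finset.mem_filter] at hw
        exact hw.2 (hxy ▸ hw.1.2)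
      have hK01z : K01.card = 0 := by
        rw [Finset.card_eq_zero, Finset.eq_empty_iff_forall_notMem]
        intro w hw
        rw [hK01d, Finset.mem_filter, Finset.mem_filter] at hw
        exact hw.1.2 (hxy ▸ hw.2 : G.Adj (f x) (f w))
      have hK11k : (K11.card : ℚ) ≤ (k : ℚ) := by
        have hsub : K11.card ≤ (G.neighborFinset (f x)).card := by
          apply Finset.card_le_card_of_injOn f
          · intro w hw
            rw [hK11d, Finset.mem_coe, Finset.mem_filter, Finset.mem_filter] at hw
            rw [Finset.mem_coe, mem_neighborFinset]
            exact hw.1.2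
          · exact f.injective.injOn
        rw [card_neighborFinset_eq_degree, hG.regular] at hsub
        exact_mod_cast hsub
      have hK00n : (K00.card : ℚ) ≤ (n : ℚ) - 1 - k := by
        refine le_trans ?_ (samepart_bound hG (f x))
        have hsub : K00.card ≤ ((univ : Finset V).filter fun v =>
            v ≠ f x ∧ ¬ G.Adj (f x) v).card := by
          apply Finset.card_le_card_of_injOn f
          · intro w hw
            rw [hK00d, Finset.mem_coe, Finset.mem_filter, Finset.mem_filter, hU, Finset.mem_filter] at hw
            have hwx : w ≠ x := fun h => hw.1.1.2 (Or.inl h)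
            exact Finset.mem_filter.mpr ⟨Finset.mem_univ _, f.injective.ne hwx, hw.1.2⟩
          · exact f.injective.injOn
        exact_mod_cast hsub
      have hcells : 2 * (((cell u u).card + (cell (-u) (-u)).card : ℤ)) ≤ (ζ : ℤ) + α :=
        cell_eq_bound hH.1 hupm (hH.2 i0 j0 hij)
      have hcq : 2 * ((cell u u).card : ℚ) + 2 * ((cell (-u) (-u)).card : ℚ)
          ≤ (ζ : ℚ) + α := by
        have : ((2 * ((cell u u).card + (cell (-u) (-u)).card) : ℤ) : ℚ) ≤ ((ζ : ℤ) + α : ℤ) := by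
          exact_mod_cast hcells
        push_cast at this
        linarith
      have hmQ : (S.card : ℚ) ≤ (K11.card : ℚ) * (cell u u).card
          + (K00.card : ℚ) * (cell (-u) (-u)).card := by
        have hm := hmain
        rw [hK10z, hK01z, Nat.zero_mul, Nat.zero_mul, Nat.add_zero, Nat.zero_add] at hm
        exact_mod_cast hm
      have c1 : (0 : ℚ) ≤ ((cell u u).card : ℚ) := Nat.cast_nonneg _
      have c4 : (0 : ℚ) ≤ ((cell (-u) (-u)).card : ℚ) := Nat.cast_nonneg _
      have hk2 : (k : ℚ) ≤ 2 * θ := by linarith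
      have hn2 : (n : ℚ) - 1 - k ≤ 2 * θ := by linarith
      have p1 : (K11.card : ℚ) * (cell u u).card ≤ 2 * θ * (cell u u).card :=
        mul_le_mul_of_nonneg_right (le_trans hK11k hk2) c1
      have p4 : (K00.card : ℚ) * (cell (-u) (-u)).card ≤ 2 * θ * (cell (-u) (-u)).card :=
        mul_le_mul_of_nonneg_right (le_trans hK00n hn2) c4
      have hdist : 2 * θ * ((cell u u).card : ℚ) + 2 * θ * ((cell (-u) (-u)).card : ℚ)
          ≤ θ * ((ζ : ℚ) + α) := by
        have := mul_le_mul_of_nonneg_left hcq hθ0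
        nlinarith
      linarith
    · -- different parts
      have hfxy : f x ≠ f y := f.injective.ne hxy
      have hcommon : (((univ : Finset V).filter fun v =>
          G.Adj (f x) v ∧ G.Adj (f y) v).card : ℚ) ≤ θ := by
        by_cases ha : G.Adj (f x) (f y)
        · rw [card_common_adj hG ha]; exact h2
        · rw [card_common_nonadj hG hfxy ha]; exact h3
      have hb11 : (K11.card : ℚ) ≤ θ := le_trans (by exact_mod_cast hK11V) hcommon
      have hb10 : (K10.card : ℚ) ≤ θ :=
        le_trans (by exact_mod_cast hK10V) (cross_bound hG hfxy h1 h2 h3 h5 h6)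
      have hb01 : (K01.card : ℚ) ≤ θ :=
        le_trans (by exact_mod_cast hK01V) (cross_bound hG hfxy.symm h1 h2 h3 h5 h6)
      have hb00 : (K00.card : ℚ) ≤ θ :=
        le_trans (by exact_mod_cast hK00V) (nn_bound hG hfxy h5 h6)
      have hcsum : ((cell u u).card + (cell u (-u)).card)
          + ((cell (-u) u).card + (cell (-u) (-u)).card) = ζ := cell_sum hH.1 hupm
      have hcsumQ : ((cell u u).card : ℚ) + ((cell u (-u)).card : ℚ)
          + ((cell (-u) u).card : ℚ) + ((cell (-u) (-u)).card : ℚ) = (ζ : ℚ) := by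
        have := congrArg (Nat.cast : ℕ → ℚ) hcsum
        push_cast at this
        linarith
      have hmQ : (S.card : ℚ) ≤ (K11.card : ℚ) * (cell u u).card
          + (K10.card : ℚ) * (cell u (-u)).card
          + ((K01.card : ℚ) * (cell (-u) u).card
          + (K00.card : ℚ) * (cell (-u) (-u)).card) := by
        exact_mod_cast hmain
      have c1 : (0 : ℚ) ≤ ((cell u u).card : ℚ) := Nat.cast_nonneg _
      have c2 : (0 : ℚ) ≤ ((cell u (-u)).card : ℚ) := Nat.cast_nonneg _
      have c3 : (0 : ℚ) ≤ ((cell (-u) u).card : ℚ) := Nat.cast_nonneg _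
      have c4 : (0 : ℚ) ≤ ((cell (-u) (-u)).card : ℚ) := Nat.cast_nonneg _
      have p1 := mul_le_mul_of_nonneg_right hb11 c1
      have p2 := mul_le_mul_of_nonneg_right hb10 c2
      have p3 := mul_le_mul_of_nonneg_right hb01 c3
      have p4 := mul_le_mul_of_nonneg_right hb00 c4
      have hdist : θ * ((cell u u).card : ℚ) + θ * ((cell u (-u)).card : ℚ)
          + θ * ((cell (-u) u).card : ℚ) + θ * ((cell (-u) (-u)).card : ℚ)
          = θ * (ζ : ℚ) := by
        rw [← hcsumQ]; ring
      have hζα : θ * (ζ : ℚ) ≤ θ * ((ζ : ℚ) + α) := by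
        have := mul_nonneg hθ0 (Nat.cast_nonneg (α := ℚ) α)
        nlinarith
      linarith
  rw [hScard] at hfinal
  push_cast at hfinal
  linarith


end NoArrows
section Upper

lemma fin2_cases (t : Fin 2) : t = 0 ∨ t = 1 := by
  fin_cases t
  · exact Or.inl rfl
  · exact Or.inr rfl

lemma arrowsOf {c ζ T : ℕ} (hζ : 1 ≤ ζ) (hc : 1 ≤ c)
    (hbig : (((c : ℚ) - 1) * ζ) * (((c : ℚ) - 1) * ζ - 2) > 4 * T * ((c : ℚ) * ζ - 1)) :
    Arrows c ζ (T + 1) 2 := by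
  classical
  intro C hCsym
  by_contra hno
  push_neg at hno
  set N : ℕ := c * ζ with hN
  have hN1 : 1 ≤ N := Nat.mul_le_mul hc hζ
  have hcardV' : Fintype.card (Fin c × Fin ζ) = N := by
    rw [Fintype.card_prod, Fintype.card_fin, Fintype.card_fin]
  set Nb : Fin 2 → (Fin c × Fin ζ) → Finset (Fin c × Fin ζ) := fun t v =>
    univ.filter (fun w => (multiK c ζ).Adj v w ∧ C v w = t) with hNb
  -- cap on common monochromatic neighbourhoods
  have hcap : ∀ (t : Fin 2) (p : (Fin c × Fin ζ) × (Fin c × Fin ζ)), p.1 ≠ p.2 →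
      (univ.filter (fun v => p.1 ∈ Nb t v ∧ p.2 ∈ Nb t v)).card ≤ T := by
    intro t p hp
    by_contra hgt
    push_neg at hgt
    obtain ⟨S, hSsub, hScard⟩ := Finset.exists_subset_card_eq hgt
    have hmem : ∀ v ∈ S, (multiK c ζ).Adj p.1 v ∧ (multiK c ζ).Adj p.2 v
        ∧ C p.1 v = t ∧ C p.2 v = t := by
      intro v hv
      have h := Finset.mem_filter.mp (hSsub hv)
      obtain ⟨-, h1, h2⟩ := h
      rw [hNb, Finset.mem_filter] at h1 h2
      exact ⟨h1.2.1.symm, h2.2.1.symm, (hCsym p.1 v).trans h1.2.2,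
        (hCsym p.2 v).trans h2.2.2⟩
    have hp1S : p.1 ∉ S := by
      intro hmem'
      exact (multiK c ζ).loopless.irrefl p.1 (hmem p.1 hmem').1
    have hp2S : p.2 ∉ S := by
      intro hmem'
      exact (multiK c ζ).loopless.irrefl p.2 (hmem p.2 hmem').2.1
    exact hno t ⟨p.1, p.2, S, hp, hp1S, hp2S, hScard, hmem⟩
  -- degrees
  set Dg := (c - 1) * ζ with hDg
  have hdeg : ∀ v : Fin c × Fin ζ, (Nb 0 v).card + (Nb 1 v).card = Dg := by
    intro v
    have hdisj : Disjoint (Nb 0 v) (Nb 1 v) := by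
      rw [Finset.disjoint_left]
      intro w h0 h1
      rw [hNb, Finset.mem_filter] at h0 h1
      have h01 := h0.2.2.symm.trans h1.2.2
      exact absurd h01 (by decide)
    have hunion : Nb 0 v ∪ Nb 1 v = univ.filter (fun w => (multiK c ζ).Adj v w) := by
      ext w
      simp only [hNb, Finset.mem_union, Finset.mem_filter, Finset.mem_univ, true_and]
      constructor
      · rintro (⟨h, -⟩ | ⟨h, -⟩) <;> exact h
      · intro h
        rcases fin2_cases (C v w) with h' | h'
        · exact Or.inl ⟨h, h'⟩
        · exact Or.inr ⟨h, h'⟩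
    have hcard2 : (univ.filter (fun w : Fin c × Fin ζ => (multiK c ζ).Adj v w)).card
        = (c - 1) * ζ := by
      have he : univ.filter (fun w : Fin c × Fin ζ => (multiK c ζ).Adj v w)
          = (univ.erase v.1) ×ˢ (univ : Finset (Fin ζ)) := by
        ext w
        constructor
        · intro hw
          have h : v.1 ≠ w.1 := (Finset.mem_filter.mp hw).2
          exact Finset.mem_product.mpr
            ⟨Finset.mem_erase.mpr ⟨Ne.symm h, Finset.mem_univ _⟩, Finset.mem_univ _⟩
        · intro hw
          have h := (Finset.mem_erase.mp (Finset.mem_product.mp hw).1).1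
          exact Finset.mem_filter.mpr ⟨Finset.mem_univ _, Ne.symm h⟩
      rw [he, Finset.card_product, Finset.card_erase_of_mem (Finset.mem_univ _),
        Finset.card_univ, Finset.card_univ, Fintype.card_fin, Fintype.card_fin]
    rw [← Finset.card_union_of_disjoint hdisj, hunion, hcard2, hDg]
  -- double counting
  have hswap : ∀ t : Fin 2, ∑ v : Fin c × Fin ζ, ((Nb t v).offDiag).card
      = ∑ p ∈ (univ : Finset (Fin c × Fin ζ)).offDiag,
          (univ.filter (fun v => p.1 ∈ Nb t v ∧ p.2 ∈ Nb t v)).card := by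
    intro t
    have h1 : ∀ v, (Nb t v).offDiag
        = (univ : Finset (Fin c × Fin ζ)).offDiag.filter
            (fun p => p.1 ∈ Nb t v ∧ p.2 ∈ Nb t v) := by
      intro v
      ext p
      simp only [Finset.mem_offDiag, Finset.mem_filter, Finset.mem_univ, true_and]
      tauto
    calc ∑ v : Fin c × Fin ζ, ((Nb t v).offDiag).card
        = ∑ v : Fin c × Fin ζ, ∑ p ∈ (univ : Finset (Fin c × Fin ζ)).offDiag,
            (if p.1 ∈ Nb t v ∧ p.2 ∈ Nb t v then 1 else 0) := by
          refine Finset.sum_congr rfl fun v _ => ?_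
          rw [h1 v, Finset.card_filter]
      _ = ∑ p ∈ (univ : Finset (Fin c × Fin ζ)).offDiag, ∑ v : Fin c × Fin ζ,
            (if p.1 ∈ Nb t v ∧ p.2 ∈ Nb t v then 1 else 0) := Finset.sum_comm
      _ = _ := by
          refine Finset.sum_congr rfl fun p _ => ?_
          rw [Finset.card_filter]
  have hub : ∀ t : Fin 2, ∑ v : Fin c × Fin ζ, ((Nb t v).offDiag).card ≤ (N * N - N) * T := by
    intro t
    rw [hswap t]
    calc ∑ p ∈ (univ : Finset (Fin c × Fin ζ)).offDiag,
          (univ.filter (fun v => p.1 ∈ Nb t v ∧ p.2 ∈ Nb t v)).card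
        ≤ ∑ _p ∈ (univ : Finset (Fin c × Fin ζ)).offDiag, T :=
          Finset.sum_le_sum fun p hp => hcap t p (Finset.mem_offDiag.mp hp).2.2
      _ = (N * N - N) * T := by
          rw [Finset.sum_const, smul_eq_mul, Finset.offDiag_card, Finset.card_univ, hcardV']
  -- lower bound per vertex
  have hDgQ : (Dg : ℚ) = ((c : ℚ) - 1) * ζ := by
    rw [hDg, Nat.cast_mul, Nat.cast_sub hc, Nat.cast_one]
  have hlow : ∀ v : Fin c × Fin ζ, (Dg : ℚ) * ((Dg : ℚ) - 2) / 2
      ≤ ((Nb 0 v).offDiag.card : ℚ) + ((Nb 1 v).offDiag.card : ℚ) := by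
    intro v
    have hod : ∀ t, ((Nb t v).offDiag.card : ℚ)
        = ((Nb t v).card : ℚ) * (Nb t v).card - (Nb t v).card := by
      intro t
      rw [Finset.offDiag_card]
      have hle : (Nb t v).card ≤ (Nb t v).card * (Nb t v).card := by
        rcases Nat.eq_zero_or_pos (Nb t v).card with h | h
        · simp [h]
        · exact Nat.le_mul_of_pos_left _ h
      rw [Nat.cast_sub hle, Nat.cast_mul]
    rw [hod 0, hod 1]
    have hsumQ : ((Nb 0 v).card : ℚ) + (Nb 1 v).card = (Dg : ℚ) := by
      exact_mod_cast congrArg (Nat.cast : ℕ → ℚ) (hdeg v)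
    nlinarith [sq_nonneg (((Nb 0 v).card : ℚ) - (Nb 1 v).card)]
  -- combine
  have htotlow : (N : ℚ) * ((Dg : ℚ) * ((Dg : ℚ) - 2) / 2)
      ≤ ∑ v : Fin c × Fin ζ, (((Nb 0 v).offDiag.card : ℚ) + ((Nb 1 v).offDiag.card : ℚ)) := by
    calc (N : ℚ) * ((Dg : ℚ) * ((Dg : ℚ) - 2) / 2)
        = ∑ _v : Fin c × Fin ζ, (Dg : ℚ) * ((Dg : ℚ) - 2) / 2 := by
          rw [Finset.sum_const, Finset.card_univ, hcardV', nsmul_eq_mul]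
      _ ≤ _ := Finset.sum_le_sum fun v _ => hlow v
  have htotup : ∑ v : Fin c × Fin ζ, (((Nb 0 v).offDiag.card : ℚ) + ((Nb 1 v).offDiag.card : ℚ))
      ≤ 2 * ((N * N - N : ℕ) : ℚ) * T := by
    rw [Finset.sum_add_distrib]
    have e : ∀ t : Fin 2, ∑ v : Fin c × Fin ζ, ((Nb t v).offDiag.card : ℚ)
        ≤ ((N * N - N : ℕ) : ℚ) * T := by
      intro t
      have h := hub t
      have : ((∑ v : Fin c × Fin ζ, ((Nb t v).offDiag).card : ℕ) : ℚ)
          ≤ (((N * N - N) * T : ℕ) : ℚ) := by exact_mod_cast h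
      rw [Nat.cast_sum] at this
      rw [Nat.cast_mul] at this
      exact this
    linarith [e 0, e 1]
  have hNNQ : ((N * N - N : ℕ) : ℚ) = (N : ℚ) * N - N := by
    have hle : N ≤ N * N := Nat.le_mul_of_pos_left _ (lt_of_lt_of_le Nat.zero_lt_one hN1)
    rw [Nat.cast_sub hle, Nat.cast_mul]
  have hNQ : (N : ℚ) = (c : ℚ) * ζ := by
    rw [hN, Nat.cast_mul]
  have hN0 : (0 : ℚ) < N := by
    exact_mod_cast lt_of_lt_of_le Nat.zero_lt_one hN1
  rw [hNNQ] at htotup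
  have hfinal : (N : ℚ) * ((Dg : ℚ) * ((Dg : ℚ) - 2) / 2) ≤ 2 * ((N : ℚ) * N - N) * T :=
    le_trans htotlow htotup
  rw [hDgQ] at hfinal
  rw [hNQ] at hfinal hN0
  nlinarith [hfinal, hbig, hN0]

end Upper

end AuxProof

/-- **Theorem (bounds for the set multipartite Ramsey number).**
If `G` is a strongly regular graph with parameters `(n,k,ℓ,μ)`, `H` is a symmetric
`[α]`-Hadamard matrix of order `ζ ≥ 2` (with `α ≤ ζ`),
`θ = max {k/2, ℓ, μ, (n-k-1)/2, n-2-2k+μ, n-2k+ℓ}` (taken in `ℚ`), and moreover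
`ζ` is even or `⌈(4θα+1)/ζ⌉ - 1` is even, then
`n + 1 ≤ M_ζ(K_{2, θ(ζ+α)+1}; 2) ≤ 4θ + 2 + ⌈(4θα+1)/ζ⌉`. -/
theorem statement2 {V : Type*} [Fintype V] (G : SimpleGraph V) [DecidableRel G.Adj]
    (n k ℓ μ : ℕ) (hG : G.IsSRGWith n k ℓ μ)
    (ζ α : ℕ) (hζ : 2 ≤ ζ) (hα : α ≤ ζ)
    (H : Matrix (Fin ζ) (Fin ζ) ℤ) (hH : IsBHadamard α H) (hHsymm : H.IsSymm)
    (θ : ℚ)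
    (hθ : θ = max (max (max ((k : ℚ) / 2) (ℓ : ℚ)) (max ((μ : ℚ)) (((n : ℚ) - k - 1) / 2)))
      (max ((n : ℚ) - 2 - 2 * k + μ) ((n : ℚ) - 2 * k + ℓ)))
    (T : ℕ) (hT : (T : ℚ) = θ * (ζ + α))
    (hpar : Even ζ ∨ Even (⌈(4 * θ * α + 1) / (ζ : ℚ)⌉ - 1)) :
    n + 1 ≤ setRamsey ζ (T + 1) 2 ∧
    (setRamsey ζ (T + 1) 2 : ℚ) ≤ 4 * θ + 2 + (⌈(4 * θ * α + 1) / (ζ : ℚ)⌉ : ℚ) := by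
  classical
  have h1 : (k : ℚ) / 2 ≤ θ := by
    rw [hθ]; exact le_max_of_le_left (le_max_of_le_left (le_max_left _ _))
  have h2 : (ℓ : ℚ) ≤ θ := by
    rw [hθ]; exact le_max_of_le_left (le_max_of_le_left (le_max_right _ _))
  have h3 : (μ : ℚ) ≤ θ := by
    rw [hθ]; exact le_max_of_le_left (le_max_of_le_right (le_max_left _ _))
  have h4 : ((n : ℚ) - k - 1) / 2 ≤ θ := by
    rw [hθ]; exact le_max_of_le_left (le_max_of_le_right (le_max_right _ _))
  have h5 : (n : ℚ) - 2 - 2 * k + μ ≤ θ := by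
    rw [hθ]; exact le_max_of_le_right (le_max_left _ _)
  have h6 : (n : ℚ) - 2 * k + ℓ ≤ θ := by
    rw [hθ]; exact le_max_of_le_right (le_max_right _ _)
  have hθ0 : 0 ≤ θ := le_trans (by positivity) h1
  have hζQ : (2 : ℚ) ≤ (ζ : ℚ) := by exact_mod_cast hζ
  have hζ0 : (0 : ℚ) < (ζ : ℚ) := by linarith
  -- 2θ is an integer
  set z : ℤ := max (max (max ((k : ℤ)) (2 * ℓ)) (max (2 * μ) ((n : ℤ) - k - 1)))
    (max (2 * ((n : ℤ) - 2 - 2 * k + μ)) (2 * ((n : ℤ) - 2 * k + ℓ))) with hzdef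
  have hz : (z : ℚ) = 2 * θ := by
    rw [hθ, hzdef]
    rw [mul_max_of_nonneg _ _ (by norm_num : (0:ℚ) ≤ 2),
      mul_max_of_nonneg _ _ (by norm_num : (0:ℚ) ≤ 2),
      mul_max_of_nonneg _ _ (by norm_num : (0:ℚ) ≤ 2),
      mul_max_of_nonneg _ _ (by norm_num : (0:ℚ) ≤ 2),
      mul_max_of_nonneg _ _ (by norm_num : (0:ℚ) ≤ 2)]
    push_cast
    ring_nf
  have hz0 : 0 ≤ z := by
    have : (0 : ℚ) ≤ (z : ℚ) := by rw [hz]; linarith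
    exact_mod_cast this
  -- the ceiling
  set m : ℤ := ⌈(4 * θ * α + 1) / (ζ : ℚ)⌉ with hmdef
  have hαQ : (0 : ℚ) ≤ (α : ℚ) := Nat.cast_nonneg _
  have hm1 : 1 ≤ m := by
    rw [hmdef]
    have hpos : (0 : ℚ) < (4 * θ * α + 1) / (ζ : ℚ) := by positivity
    exact Int.ceil_pos.mpr hpos
  have hmz : 4 * θ * α + 1 ≤ (m : ℚ) * ζ := by
    have hle := Int.le_ceil ((4 * θ * α + 1) / (ζ : ℚ))
    rw [← hmdef] at hle
    rw [div_le_iff₀ hζ0] at hle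
    exact hle
  set c₀ : ℕ := (2 * z + 2 + m).toNat with hc₀def
  have hc₀Z : (c₀ : ℤ) = 2 * z + 2 + m := by
    rw [hc₀def]
    exact Int.toNat_of_nonneg (by omega)
  have hc₀pos : 0 < c₀ := by omega
  have hc₀Q : (c₀ : ℚ) = 4 * θ + 2 + (m : ℚ) := by
    have h := congrArg (fun w : ℤ => (w : ℚ)) hc₀Z
    push_cast at h
    rw [h, hz]
    ring
  -- the key inequality for the upper bound
  have hbig : (((c₀ : ℚ) - 1) * ζ) * (((c₀ : ℚ) - 1) * ζ - 2)
      > 4 * (T : ℚ) * ((c₀ : ℚ) * ζ - 1) := by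
    set y : ℚ := ((c₀ : ℚ) - 1) * ζ with hydef
    have hTnn : (0 : ℚ) ≤ (T : ℚ) := Nat.cast_nonneg _
    have hT4 : 4 * (T : ℚ) = 4 * θ * ζ + 4 * θ * α := by rw [hT]; ring
    have hyv : y = 4 * θ * ζ + ζ + (m : ℚ) * ζ := by rw [hydef, hc₀Q]; ring
    have hy : 4 * (T : ℚ) + ζ + 1 ≤ y := by
      rw [hyv, hT4]
      linarith
    have hcz : (c₀ : ℚ) * ζ = y + ζ := by rw [hydef]; ring
    rw [hcz]
    have hkey : 0 ≤ (y - (4 * T + ζ + 1)) * (y + (4 * T + ζ + 1) - (4 * T + 2)) :=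
      mul_nonneg (by linarith) (by linarith)
    have hsq : 0 ≤ ((ζ : ℚ) - 2) * ζ := mul_nonneg (by linarith) (by linarith)
    nlinarith [hkey, hsq]
  have harr : Arrows c₀ ζ (T + 1) 2 := arrowsOf (by omega) hc₀pos hbig
  have hmem : c₀ ∈ {c : ℕ | 0 < c ∧ Arrows c ζ (T + 1) 2} := ⟨hc₀pos, harr⟩
  have hne : {c : ℕ | 0 < c ∧ Arrows c ζ (T + 1) 2}.Nonempty := ⟨c₀, hmem⟩
  have hinf_mem := Nat.sInf_mem hne
  have hinf_le : sInf {c : ℕ | 0 < c ∧ Arrows c ζ (T + 1) 2} ≤ c₀ := Nat.sInf_le hmem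
  constructor
  · unfold setRamsey
    by_contra hcon
    push_neg at hcon
    have hle : sInf {c : ℕ | 0 < c ∧ Arrows c ζ (T + 1) 2} ≤ n := by omega
    exact noArrows hG hH hHsymm h1 h2 h3 h4 h5 h6 hT hle hinf_mem.2
  · unfold setRamsey
    have : ((sInf {c : ℕ | 0 < c ∧ Arrows c ζ (T + 1) 2} : ℕ) : ℚ) ≤ (c₀ : ℚ) := by
      exact_mod_cast hinf_le
    rw [hc₀Q] at this
    exact this
end

section
/- Let n ≥ 2. Suppose that there exists a strongly regular graph with parameters (4n−3, 2n−2, n−2, n−1) and a symmetric [α]-Hadamard matrix of even order ζ with ζ > (√2+1)(2n−1)(4αn−4α+1). Then M_ζ(K_{2, (ζ+α)(n−1)+1}; 2) = 4n−2. -/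
open Finset Matrix

open SimpleGraph in
lemma srg_common_finset {V : Type} [Fintype V] [DecidableEq V] (G : SimpleGraph V)
    [DecidableRel G.Adj] (x y : V) :
    ((univ : Finset V).filter fun r => G.Adj x r ∧ G.Adj y r).card
      = Fintype.card (G.commonNeighbors x y) := by
  rw [← Set.toFinset_card]
  congr 1
  ext r
  simp [mem_commonNeighbors]

open SimpleGraph in
lemma srg_mixed_card {V : Type} [Fintype V] [DecidableEq V] {G : SimpleGraph V}
    [DecidableRel G.Adj] {n : ℕ} (hn : 2 ≤ n)
    (h : G.IsSRGWith (4*n-3) (2*n-2) (n-2) (n-1)) {x y : V} (hxy : x ≠ y) :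
    ((univ : Finset V).filter fun r => G.Adj x r ∧ ¬ G.Adj y r ∧ r ≠ y).card ≤ n - 1 := by
  have hdeg : (G.neighborFinset x).card = 2*n-2 := by
    rw [card_neighborFinset_eq_degree, h.regular x]
  have hfe : (univ : Finset V).filter (fun r => G.Adj x r ∧ ¬ G.Adj y r ∧ r ≠ y)
      = G.neighborFinset x \ (G.neighborFinset y ∪ {y}) := by
    ext r
    simp only [mem_filter, mem_univ, true_and, mem_sdiff, mem_neighborFinset, mem_union,
      mem_singleton]
    tauto
  have hinter : (G.neighborFinset x ∩ (G.neighborFinset y ∪ {y})).card = n - 1 := by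
    rw [Finset.inter_union_distrib_left]
    have hdisj : Disjoint (G.neighborFinset x ∩ G.neighborFinset y)
        (G.neighborFinset x ∩ {y}) := by
      apply Finset.disjoint_left.2
      intro a ha ha'
      simp only [mem_inter, mem_neighborFinset, mem_singleton] at ha ha'
      exact (G.notMem_neighborFinset_self y) (by rw [← ha'.2] at ha; simpa [mem_neighborFinset] using ha.2)
    rw [Finset.card_union_of_disjoint hdisj]
    have hcn : (G.neighborFinset x ∩ G.neighborFinset y).card
        = Fintype.card (G.commonNeighbors x y) := by
      rw [← srg_common_finset G x y]
      congr 1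
      ext r
      simp [mem_neighborFinset]
    by_cases hadj : G.Adj x y
    · rw [hcn, h.of_adj x y hadj]
      have : G.neighborFinset x ∩ {y} = {y} := by
        rw [Finset.inter_eq_right]
        simpa [mem_neighborFinset] using hadj
      rw [this]
      simp
      omega
    · rw [hcn, h.of_not_adj hxy hadj]
      have : G.neighborFinset x ∩ {y} = ∅ := by
        rw [Finset.inter_singleton_of_notMem]
        simpa [mem_neighborFinset] using hadj
      rw [this]
      simp
  have := Finset.card_sdiff_add_card_inter (G.neighborFinset x) (G.neighborFinset y ∪ {y})
  rw [hfe]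
  omega

open SimpleGraph in
lemma srg_class_card {V : Type} [Fintype V] [DecidableEq V] {G : SimpleGraph V}
    [DecidableRel G.Adj] {n : ℕ} (hn : 2 ≤ n)
    (h : G.IsSRGWith (4*n-3) (2*n-2) (n-2) (n-1)) {p q : V} (hpq : p ≠ q)
    (s₁ s₂ : Prop) [Decidable s₁] [Decidable s₂] :
    ((univ : Finset V).filter fun r => r ≠ p ∧ r ≠ q ∧ (G.Adj p r ↔ s₁) ∧ (G.Adj q r ↔ s₂)).card
      ≤ n - 1 := by
  by_cases h1 : s₁ <;> by_cases h2 : s₂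
  · -- both adjacent: common neighbors
    have he : ((univ : Finset V).filter fun r =>
        r ≠ p ∧ r ≠ q ∧ (G.Adj p r ↔ s₁) ∧ (G.Adj q r ↔ s₂))
        = (univ.filter fun r => G.Adj p r ∧ G.Adj q r) := by
      ext r
      simp only [mem_filter, mem_univ, true_and, h1, h2, iff_true]
      refine ⟨fun hr => ⟨hr.2.2.1, hr.2.2.2⟩, fun hr => ⟨(G.ne_of_adj hr.1).symm, (G.ne_of_adj hr.2).symm, hr.1, hr.2⟩⟩
    rw [he, srg_common_finset]
    by_cases hadj : G.Adj p q
    · rw [h.of_adj p q hadj]; omega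
    · rw [h.of_not_adj hpq hadj]
  · -- Adj p, not Adj q
    have he : ((univ : Finset V).filter fun r =>
        r ≠ p ∧ r ≠ q ∧ (G.Adj p r ↔ s₁) ∧ (G.Adj q r ↔ s₂))
        = (univ.filter fun r => G.Adj p r ∧ ¬ G.Adj q r ∧ r ≠ q) := by
      ext r
      simp only [mem_filter, mem_univ, true_and, h1, h2, iff_true, iff_false]
      exact ⟨fun hr => ⟨hr.2.2.1, hr.2.2.2, hr.2.1⟩,
        fun hr => ⟨(G.ne_of_adj hr.1).symm, hr.2.2, hr.1, hr.2.1⟩⟩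
    rw [he]
    exact srg_mixed_card hn h hpq
  · -- not Adj p, Adj q
    have he : ((univ : Finset V).filter fun r =>
        r ≠ p ∧ r ≠ q ∧ (G.Adj p r ↔ s₁) ∧ (G.Adj q r ↔ s₂))
        = (univ.filter fun r => G.Adj q r ∧ ¬ G.Adj p r ∧ r ≠ p) := by
      ext r
      simp only [mem_filter, mem_univ, true_and, h1, h2, iff_true, iff_false]
      exact ⟨fun hr => ⟨hr.2.2.2, hr.2.2.1, hr.1⟩,
        fun hr => ⟨hr.2.2, (G.ne_of_adj hr.1).symm, hr.2.1, hr.1⟩⟩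
    rw [he]
    exact srg_mixed_card hn h hpq.symm
  · -- both non-adjacent: common neighbors in complement
    classical
    have hc := h.compl
    have he : ((univ : Finset V).filter fun r =>
        r ≠ p ∧ r ≠ q ∧ (G.Adj p r ↔ s₁) ∧ (G.Adj q r ↔ s₂))
        = (univ.filter fun r => Gᶜ.Adj p r ∧ Gᶜ.Adj q r) := by
      ext r
      simp only [mem_filter, mem_univ, true_and, h1, h2, iff_false, compl_adj]
      constructor
      · rintro ⟨hrp, hrq, h1', h2'⟩
        exact ⟨⟨hrp.symm, h1'⟩, ⟨hrq.symm, h2'⟩⟩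
      · rintro ⟨⟨hrp, h1'⟩, ⟨hrq, h2'⟩⟩
        exact ⟨hrp.symm, hrq.symm, h1', h2'⟩
    rw [he, srg_common_finset]
    by_cases hadj : Gᶜ.Adj p q
    · rw [hc.of_adj p q hadj]
      omega
    · rw [hc.of_not_adj hpq hadj]
      omega

lemma hadamard_agree {ζ α : ℕ} {H : Matrix (Fin ζ) (Fin ζ) ℤ} (hpm : PMOne H)
    (hα : ∀ i j, i ≠ j → |(H * Hᵀ) i j| ≤ (α : ℤ)) {i j : Fin ζ} (hij : i ≠ j) :
    2 * ((univ.filter fun k => H i k = H j k).card) ≤ ζ + α := by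
  set s := univ.filter fun k => H i k = H j k with hs
  have hmul : (H * Hᵀ) i j = ∑ k, H i k * H j k := by
    simp [Matrix.mul_apply, Matrix.transpose_apply]
  have hsplit : ∑ k, H i k * H j k
      = ∑ k ∈ s, H i k * H j k + ∑ k ∈ univ.filter fun k => ¬ H i k = H j k, H i k * H j k := by
    rw [Finset.sum_filter_add_sum_filter_not]
  have h1 : ∑ k ∈ s, H i k * H j k = (s.card : ℤ) := by
    rw [Finset.sum_congr rfl (fun k hk => ?_), Finset.sum_const, nsmul_eq_mul, mul_one]
    have hk' : H i k = H j k := (Finset.mem_filter.1 hk).2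
    rcases hpm i k with h' | h' <;> rw [hk'] at h' <;> rw [hk', h'] <;> norm_num
  have h2 : ∑ k ∈ univ.filter (fun k => ¬ H i k = H j k), H i k * H j k
      = -(((univ.filter fun k => ¬ H i k = H j k).card : ℤ)) := by
    rw [Finset.sum_congr rfl (fun k hk => ?_), Finset.sum_const, nsmul_eq_mul, mul_neg, mul_one]
    have hk' : ¬ H i k = H j k := (Finset.mem_filter.1 hk).2
    rcases hpm i k with h' | h' <;> rcases hpm j k with h'' | h'' <;>
      simp [h', h''] at hk' ⊢
  have hcards : s.card + (univ.filter fun k => ¬ H i k = H j k).card = ζ := by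
    rw [hs, Finset.card_filter_add_card_filter_not]
    simp
  have habs := hα i j hij
  rw [hmul, hsplit, h1, h2] at habs
  rw [abs_le] at habs
  omega

lemma ite_fin2_eq (P : Prop) [Decidable P] (i : Fin 2) :
    ((if P then (0 : Fin 2) else 1) = i) ↔ (P ↔ i = 0) := by
  by_cases hP : P <;> fin_cases i <;> simp [hP]

set_option maxHeartbeats 1000000 in
open SimpleGraph in
lemma notArrows {n ζ α c : ℕ} (hn : 2 ≤ n) (hc : c ≤ 4*n-3)
    {V : Type} [Fintype V] (G : SimpleGraph V) [DecidableRel G.Adj]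
    (hG : G.IsSRGWith (4*n-3) (2*n-2) (n-2) (n-1))
    {H : Matrix (Fin ζ) (Fin ζ) ℤ} (hsym : H.IsSymm) (hpm : PMOne H)
    (hα : ∀ i j, i ≠ j → |(H * Hᵀ) i j| ≤ (α : ℤ)) :
    ¬ Arrows c ζ ((ζ+α)*(n-1)+1) 2 := by
  classical
  obtain ⟨f⟩ : Nonempty (Fin c ↪ V) :=
    Function.Embedding.nonempty_of_card_le (by rw [Fintype.card_fin, hG.card]; exact hc)
  set C : (Fin c × Fin ζ) → (Fin c × Fin ζ) → Fin 2 :=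
    fun v w => if (G.Adj (f v.1) (f w.1) ↔ H v.2 w.2 = 1) then 0 else 1 with hC
  have hCsymm : ∀ v w, C v w = C w v := by
    intro v w
    simp only [hC, hsym.apply w.2 v.2, G.adj_comm (f v.1) (f w.1)]
  -- the central bound
  have key : ∀ (a b : Fin c × Fin ζ), a ≠ b → ∀ i : Fin 2,
      ((univ : Finset (Fin c × Fin ζ)).filter fun v =>
        a.1 ≠ v.1 ∧ b.1 ≠ v.1 ∧ C a v = i ∧ C b v = i).card ≤ (ζ+α)*(n-1) := by
    rintro ⟨p, i0⟩ ⟨q, j0⟩ hab i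
    set σ : Prop := (i = 0) with hσ
    have hCeq : ∀ (x : Fin c) (y : Fin ζ) (v : Fin c × Fin ζ),
        (C (x, y) v = i) ↔ ((G.Adj (f x) (f v.1) ↔ H y v.2 = 1) ↔ σ) := by
      intro x y v
      simp only [hC, hσ]
      exact ite_fin2_eq _ i
    by_cases hpq : p = q
    · -- same part, different rows
      subst hpq
      have hij : i0 ≠ j0 := by
        intro h; exact hab (by rw [h])
      set L1 := (univ : Finset (Fin c)).filter (fun r => G.Adj (f p) (f r)) with hL1
      set L2 := (univ : Finset (Fin c)).filter (fun r => r ≠ p ∧ ¬ G.Adj (f p) (f r)) with hL2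
      set R1 := (univ : Finset (Fin ζ)).filter
        (fun k => ((H i0 k = 1) ↔ σ) ∧ ((H j0 k = 1) ↔ σ)) with hR1
      set R2 := (univ : Finset (Fin ζ)).filter
        (fun k => ((H i0 k = -1) ↔ σ) ∧ ((H j0 k = -1) ↔ σ)) with hR2
      have hsub : ((univ : Finset (Fin c × Fin ζ)).filter fun v =>
          p ≠ v.1 ∧ p ≠ v.1 ∧ C (p, i0) v = i ∧ C (p, j0) v = i)
            ⊆ L1 ×ˢ R1 ∪ L2 ×ˢ R2 := by
        intro v hv
        rw [mem_filter] at hv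
        obtain ⟨-, hv1, -, hcv1, hcv2⟩ := hv
        rw [hCeq] at hcv1 hcv2
        simp only [mem_union, mem_product, hL1, hL2, hR1, hR2, mem_filter, mem_univ, true_and]
        have hneg : ∀ (y k : Fin ζ), (¬ H y k = 1) ↔ H y k = -1 := by
          intro y k
          rcases hpm y k with h|h <;> rw [h] <;> norm_num
        by_cases hadj : G.Adj (f p) (f v.1)
        · left
          refine ⟨hadj, ?_, ?_⟩ <;> tauto
        · right
          have h1 : H i0 v.2 = -1 ↔ σ := by rw [← hneg i0 v.2]; tauto
          have h2 : H j0 v.2 = -1 ↔ σ := by rw [← hneg j0 v.2]; tauto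
          exact ⟨⟨fun h => hv1 h.symm, hadj⟩, h1, h2⟩
      have hL1card : L1.card ≤ 2*n-2 := by
        have := Finset.card_le_card_of_injOn (s := L1) (t := G.neighborFinset (f p))
          (fun r => f r)
          (fun r hr => by
            simp only [hL1, mem_coe, mem_filter] at hr
            rw [mem_coe, mem_neighborFinset]; exact hr.2)
          (fun x _ y _ h => f.injective h)
        rw [card_neighborFinset_eq_degree, hG.regular (f p)] at this
        exact this
      have hL2card : L2.card ≤ 2*n-2 := by
        have hmaps : ∀ r ∈ L2, f r ∈ (univ.erase (f p)) \ G.neighborFinset (f p) := by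
          intro r hr
          simp only [hL2, mem_filter] at hr
          simp only [mem_sdiff, mem_erase, mem_univ, and_true, mem_neighborFinset]
          exact ⟨fun h => hr.2.1 (f.injective h), hr.2.2⟩
        have hcard2 := Finset.card_le_card_of_injOn
          (s := L2) (t := (univ.erase (f p)) \ G.neighborFinset (f p)) (fun r => f r) hmaps
          (fun x _ y _ h => f.injective h)
        have hsubset : G.neighborFinset (f p) ⊆ univ.erase (f p) := by
          intro w hw
          simp only [mem_neighborFinset] at hw
          simp only [mem_erase, mem_univ, and_true]
          exact (G.ne_of_adj hw).symm
        rw [Finset.card_sdiff_of_subset hsubset, Finset.card_erase_of_mem (mem_univ _)] at hcard2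
        rw [card_neighborFinset_eq_degree, hG.regular (f p)] at hcard2
        have hcV : (univ : Finset V).card = 4*n-3 := by
          rw [Finset.card_univ, hG.card]
        omega
      have hRsub : R1 ∪ R2 ⊆ (univ : Finset (Fin ζ)).filter (fun k => H i0 k = H j0 k) := by
        intro k hk
        simp only [mem_union, hR1, hR2, mem_filter, mem_univ, true_and] at hk ⊢
        rcases hpm i0 k with h1 | h1 <;> rcases hpm j0 k with h2 | h2 <;>
          simp [h1, h2] at hk ⊢ <;> tauto
      have hRdisj : Disjoint R1 R2 := by
        rw [Finset.disjoint_left]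
        intro k hk1 hk2
        simp only [hR1, hR2, mem_filter, mem_univ, true_and] at hk1 hk2
        rcases hpm i0 k with h1 | h1 <;> simp [h1] at hk1 hk2 <;> tauto
      have hR12 : R1.card + R2.card ≤
          ((univ : Finset (Fin ζ)).filter (fun k => H i0 k = H j0 k)).card := by
        rw [← Finset.card_union_of_disjoint hRdisj]
        exact Finset.card_le_card hRsub
      have hAg := hadamard_agree hpm hα hij
      calc ((univ : Finset (Fin c × Fin ζ)).filter fun v =>
          p ≠ v.1 ∧ p ≠ v.1 ∧ C (p, i0) v = i ∧ C (p, j0) v = i).card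
          ≤ (L1 ×ˢ R1 ∪ L2 ×ˢ R2).card := Finset.card_le_card hsub
        _ ≤ (L1 ×ˢ R1).card + (L2 ×ˢ R2).card := Finset.card_union_le _ _
        _ = L1.card * R1.card + L2.card * R2.card := by rw [Finset.card_product, Finset.card_product]
        _ ≤ (2*n-2) * R1.card + (2*n-2) * R2.card := by
            exact Nat.add_le_add (Nat.mul_le_mul_right _ hL1card) (Nat.mul_le_mul_right _ hL2card)
        _ = (n-1) * (2 * (R1.card + R2.card)) := by
            have : 2*n-2 = 2*(n-1) := by omega
            rw [this]; ring
        _ ≤ (n-1) * (ζ + α) := by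
            apply Nat.mul_le_mul_left
            omega
        _ = (ζ+α)*(n-1) := Nat.mul_comm _ _
    · -- different parts
      have hfpq : f p ≠ f q := fun h => hpq (f.injective h)
      rw [Finset.card_eq_sum_card_fiberwise
        (f := fun v : Fin c × Fin ζ => v.2) (t := univ) (fun x _ => mem_univ _)]
      have hfib : ∀ k : Fin ζ,
          (((univ : Finset (Fin c × Fin ζ)).filter fun v =>
            p ≠ v.1 ∧ q ≠ v.1 ∧ C (p, i0) v = i ∧ C (q, j0) v = i).filter
              fun v => v.2 = k).card ≤ n - 1 := by
        intro k
        have hclass := srg_class_card hn hG hfpq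
          ((H i0 k = 1) ↔ σ) ((H j0 k = 1) ↔ σ)
        refine le_trans (Finset.card_le_card_of_injOn (fun v => f v.1) ?_ ?_) hclass
        · intro v hv
          simp only [mem_coe, mem_filter, mem_univ, true_and] at hv ⊢
          obtain ⟨⟨hv1, hv2, hcv1, hcv2⟩, hvk⟩ := hv
          rw [hCeq] at hcv1 hcv2
          subst hvk
          exact ⟨fun h => hv1 (f.injective h).symm, fun h => hv2 (f.injective h).symm,
            by tauto, by tauto⟩
        · intro x hx y hy hxy
          simp only [mem_coe, mem_filter] at hx hy
          have h2 : x.2 = y.2 := by rw [hx.2, hy.2]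
          exact Prod.ext (f.injective hxy) h2
      calc ∑ k : Fin ζ, (((univ : Finset (Fin c × Fin ζ)).filter fun v =>
            p ≠ v.1 ∧ q ≠ v.1 ∧ C (p, i0) v = i ∧ C (q, j0) v = i).filter
              fun v => v.2 = k).card
          ≤ ∑ _k : Fin ζ, (n-1) := Finset.sum_le_sum (fun k _ => hfib k)
        _ = ζ * (n-1) := by rw [Finset.sum_const, Finset.card_univ, Fintype.card_fin, smul_eq_mul]
        _ ≤ (ζ+α) * (n-1) := Nat.mul_le_mul_right _ (Nat.le_add_right _ _)
  -- conclude
  intro hA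
  obtain ⟨i, a, b, S, hab, haS, hbS, hScard, hSall⟩ := hA C hCsymm
  have hsub : S ⊆ (univ : Finset (Fin c × Fin ζ)).filter fun v =>
      a.1 ≠ v.1 ∧ b.1 ≠ v.1 ∧ C a v = i ∧ C b v = i := by
    intro v hv
    obtain ⟨h1, h2, h3, h4⟩ := hSall v hv
    exact Finset.mem_filter.2 ⟨mem_univ _, h1, h2, h3, h4⟩
  have h2 := le_trans (Finset.card_le_card hsub) (key a b hab i)
  rw [hScard] at h2
  exact Nat.not_succ_le_self _ h2

lemma convex_helper (d0 d1 D : ℕ) (h : d0 + d1 = 2*D) :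
    2*(D*D - D) ≤ (d0*d0 - d0) + (d1*d1 - d1) := by
  have hsq : ∀ d : ℕ, d ≤ d * d := fun d => by
    cases d with
    | zero => simp
    | succ k => exact Nat.le_mul_of_pos_left _ (Nat.succ_pos k)
  zify [hsq d0, hsq d1, hsq D]
  nlinarith [sq_nonneg ((d0 : ℤ) - d1), sq_nonneg ((d0 : ℤ) + d1)]

lemma arith_contra (e a w : ℕ) (hw : (2*e+1)*(4*a*e+1) < w) :
    ¬ ((8*e+4)*w * (2*((4*e+1)*w * ((4*e+1)*w) - (4*e+1)*w)) ≤
       ((8*e+4)*w * ((8*e+4)*w) - (8*e+4)*w) * (2*((2*w+a)*e))) := by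
  intro h
  have hsq : ∀ d : ℕ, d ≤ d * d := fun d => by
    cases d with
    | zero => simp
    | succ k => exact Nat.le_mul_of_pos_left _ (Nat.succ_pos k)
  zify [hsq ((4*e+1)*w), hsq ((8*e+4)*w)] at h
  have hw' : ((2*e+1)*(4*a*e+1) + 1 : ℤ) ≤ w := by exact_mod_cast hw
  have hK0 : (0:ℤ) ≤ (2*(e:ℤ)+1)*(4*a*e+1) := by positivity
  have hw0 : (0:ℤ) < w := by linarith
  have h2N : (0:ℤ) ≤ 2*((8*(e:ℤ)+4)*w) := by positivity
  have hkey : ((2*e+1)*(4*a*e+1) + 1 : ℤ) * w ≤ w * w :=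
    mul_le_mul_of_nonneg_right hw' (by positivity)
  have hbig := mul_le_mul_of_nonneg_left hkey h2N
  have hae : (0:ℤ) ≤ 2*((8*(e:ℤ)+4)*w)*(a*e) := by positivity
  have hNw : (0:ℤ) < (2*((8*(e:ℤ)+4)*w))*w :=
    mul_pos (by positivity) hw0
  nlinarith [hbig, hae, hNw]

set_option maxHeartbeats 1000000 in
lemma arrows_upper (n ζ α : ℕ) (hn : 2 ≤ n) (hζeven : Even ζ)
    (hζ : 2*(2*n-1)*(4*α*(n-1)+1) < ζ) :
    Arrows (4*n-2) ζ ((ζ+α)*(n-1)+1) 2 := by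
  classical
  intro C hCsymm
  by_contra hno
  push_neg at hno
  set M := (ζ+α)*(n-1) with hM
  -- common neighborhood bound
  have key : ∀ (a b : Fin (4*n-2) × Fin ζ), a ≠ b → ∀ i : Fin 2,
      ((univ : Finset (Fin (4*n-2) × Fin ζ)).filter fun v =>
        v.1 ≠ a.1 ∧ v.1 ≠ b.1 ∧ C a v = i ∧ C b v = i).card ≤ M := by
    intro a b hab i
    by_contra hgt
    push_neg at hgt
    obtain ⟨S, hSsub, hScard⟩ := Finset.exists_subset_card_eq (Nat.succ_le_of_lt hgt)
    refine hno i ⟨a, b, S, hab, ?_, ?_, hScard, ?_⟩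
    · intro haS
      have := (Finset.mem_filter.1 (hSsub haS)).2.1
      exact this rfl
    · intro hbS
      have := (Finset.mem_filter.1 (hSsub hbS)).2.2.1
      exact this rfl
    · intro v hv
      obtain ⟨-, h1, h2, h3, h4⟩ := Finset.mem_filter.1 (hSsub hv)
      exact ⟨Ne.symm h1, Ne.symm h2, h3, h4⟩
  -- neighborhoods
  set Nb : (Fin (4*n-2) × Fin ζ) → Fin 2 → Finset (Fin (4*n-2) × Fin ζ) :=
    fun v i => univ.filter fun w => w.1 ≠ v.1 ∧ C w v = i with hNb
  -- degree sum
  have hdeg : ∀ v, (Nb v 0).card + (Nb v 1).card = (4*n-3)*ζ := by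
    intro v
    have hdisj : Disjoint (Nb v 0) (Nb v 1) := by
      rw [Finset.disjoint_left]
      intro w h0 h1
      simp only [hNb, mem_filter] at h0 h1
      rw [h0.2.2] at h1
      exact absurd h1.2.2 (by decide)
    have hunion : Nb v 0 ∪ Nb v 1 = univ.filter fun w => w.1 ≠ v.1 := by
      ext w
      simp only [hNb, mem_union, mem_filter, mem_univ, true_and]
      have : C w v = 0 ∨ C w v = 1 := by omega
      tauto
    have hcard : (univ.filter fun w : Fin (4*n-2) × Fin ζ => w.1 ≠ v.1).card = (4*n-3)*ζ := by
      have heq : (univ.filter fun w : Fin (4*n-2) × Fin ζ => w.1 ≠ v.1)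
          = (univ.erase v.1) ×ˢ univ := by
        ext w
        simp only [mem_filter, mem_univ, true_and, Finset.mem_product, mem_erase, and_true]
      rw [heq, Finset.card_product, Finset.card_erase_of_mem (mem_univ _), Finset.card_univ,
        Finset.card_univ, Fintype.card_fin, Fintype.card_fin]
      have : 4*n-2-1 = 4*n-3 := by omega
      rw [this]
    rw [← Finset.card_union_of_disjoint hdisj, hunion, hcard]
  -- the sum swap identity
  have swap : ∀ i : Fin 2,
      ∑ x ∈ (univ : Finset (Fin (4*n-2) × Fin ζ)).offDiag,
        ((univ : Finset (Fin (4*n-2) × Fin ζ)).filter fun v =>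
          v.1 ≠ x.1.1 ∧ v.1 ≠ x.2.1 ∧ C x.1 v = i ∧ C x.2 v = i).card
      = ∑ v : Fin (4*n-2) × Fin ζ, ((Nb v i).offDiag).card := by
    intro i
    have h1 : ∀ x : (Fin (4*n-2) × Fin ζ) × (Fin (4*n-2) × Fin ζ),
        ((univ : Finset (Fin (4*n-2) × Fin ζ)).filter fun v =>
          v.1 ≠ x.1.1 ∧ v.1 ≠ x.2.1 ∧ C x.1 v = i ∧ C x.2 v = i)
        = (univ.filter fun v => x.1 ∈ Nb v i ∧ x.2 ∈ Nb v i) := by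
      intro x
      ext v
      simp only [mem_filter, mem_univ, true_and, hNb]
      constructor
      · rintro ⟨h1, h2, h3, h4⟩; exact ⟨⟨Ne.symm h1, h3⟩, ⟨Ne.symm h2, h4⟩⟩
      · rintro ⟨⟨h1, h3⟩, ⟨h2, h4⟩⟩; exact ⟨Ne.symm h1, Ne.symm h2, h3, h4⟩
    have h2 : ∀ v, (Nb v i).offDiag
        = (univ : Finset (Fin (4*n-2) × Fin ζ)).offDiag.filter
            (fun x => x.1 ∈ Nb v i ∧ x.2 ∈ Nb v i) := by
      intro v
      ext x
      simp only [Finset.mem_offDiag, mem_filter, mem_univ, true_and]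
      tauto
    calc ∑ x ∈ (univ : Finset (Fin (4*n-2) × Fin ζ)).offDiag,
        ((univ : Finset (Fin (4*n-2) × Fin ζ)).filter fun v =>
          v.1 ≠ x.1.1 ∧ v.1 ≠ x.2.1 ∧ C x.1 v = i ∧ C x.2 v = i).card
        = ∑ x ∈ (univ : Finset (Fin (4*n-2) × Fin ζ)).offDiag,
            ∑ v : Fin (4*n-2) × Fin ζ, (if x.1 ∈ Nb v i ∧ x.2 ∈ Nb v i then 1 else 0) := by
          refine Finset.sum_congr rfl (fun x _ => ?_)
          rw [h1 x, Finset.card_filter]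
      _ = ∑ v : Fin (4*n-2) × Fin ζ, ∑ x ∈ (univ : Finset (Fin (4*n-2) × Fin ζ)).offDiag,
            (if x.1 ∈ Nb v i ∧ x.2 ∈ Nb v i then 1 else 0) := Finset.sum_comm
      _ = ∑ v : Fin (4*n-2) × Fin ζ, ((Nb v i).offDiag).card := by
          refine Finset.sum_congr rfl (fun v _ => ?_)
          rw [h2 v, Finset.card_filter]
  -- lower bound each vertex contribution
  obtain ⟨w, hw⟩ := hζeven
  have hζw : ζ = 2*w := by omega
  set D := (4*n-3)*w with hD
  have hvert : ∀ v : Fin (4*n-2) × Fin ζ,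
      2*(D*D - D) ≤ ((Nb v 0).offDiag).card + ((Nb v 1).offDiag).card := by
    intro v
    rw [Finset.offDiag_card, Finset.offDiag_card]
    exact convex_helper _ _ _ (by rw [hdeg v, hζw, hD]; ring)
  -- combine
  set N := (4*n-2)*ζ with hN
  have hcardV : Fintype.card (Fin (4*n-2) × Fin ζ) = N := by
    rw [Fintype.card_prod, Fintype.card_fin, Fintype.card_fin, hN]
  have hlhs : N * (2*(D*D - D)) ≤
      ∑ v : Fin (4*n-2) × Fin ζ, (((Nb v 0).offDiag).card + ((Nb v 1).offDiag).card) := by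
    calc N * (2*(D*D - D)) = ∑ _v : Fin (4*n-2) × Fin ζ, 2*(D*D-D) := by
          rw [Finset.sum_const, Finset.card_univ, hcardV, smul_eq_mul]
      _ ≤ _ := Finset.sum_le_sum (fun v _ => hvert v)
  have hrhs : ∑ v : Fin (4*n-2) × Fin ζ, (((Nb v 0).offDiag).card + ((Nb v 1).offDiag).card)
      ≤ (N*N - N) * (2*M) := by
    rw [Finset.sum_add_distrib, ← swap 0, ← swap 1, ← Finset.sum_add_distrib]
    calc ∑ x ∈ (univ : Finset (Fin (4*n-2) × Fin ζ)).offDiag, _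
        ≤ ∑ _x ∈ (univ : Finset (Fin (4*n-2) × Fin ζ)).offDiag, (M + M) := by
          refine Finset.sum_le_sum (fun x hx => ?_)
          have hne : x.1 ≠ x.2 := (Finset.mem_offDiag.1 hx).2.2
          exact Nat.add_le_add (key x.1 x.2 hne 0) (key x.1 x.2 hne 1)
      _ = (N*N - N) * (2*M) := by
          rw [Finset.sum_const, Finset.offDiag_card, Finset.card_univ, hcardV, smul_eq_mul]
          ring
  have hfinal : N * (2*(D*D - D)) ≤ (N*N - N) * (2*M) := le_trans hlhs hrhs
  -- contradiction by arithmetic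
  have hn1 : ∃ e, n = e + 1 := ⟨n - 1, by omega⟩
  obtain ⟨e, rfl⟩ := hn1
  have he : 1 ≤ e := by omega
  have he1 : 4*(e+1)-2 = 4*e+2 := by omega
  have he2 : 4*(e+1)-3 = 4*e+1 := by omega
  have he3 : e+1-1 = e := by omega
  have hNe : N = (8*e+4)*w := by rw [hN, hζw, he1]; ring
  have hDe : D = (4*e+1)*w := by rw [hD, he2]
  have hMe : M = (2*w+α)*e := by rw [hM, hζw, he3]
  rw [hNe, hDe, hMe] at hfinal
  have hwbig : (2*e+1)*(4*α*e+1) < w := by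
    have h1 : 2*((2*e+1)*(4*α*e+1)) < 2*w := by
      calc 2*((2*e+1)*(4*α*e+1)) = 2*(2*(e+1)-1)*(4*α*((e+1)-1)+1) := by
            rw [show 2*(e+1)-1 = 2*e+1 by omega, show (e+1)-1 = e by omega]; ring
        _ < ζ := hζ
        _ = 2*w := hζw
    exact Nat.lt_of_mul_lt_mul_left h1
  exact arith_contra e α w hwbig hfinal


/-- **Theorem (exact value of the set multipartite Ramsey number).**
Let `n ≥ 2`. Suppose there exist a strongly regular graph with parameters
`(4n-3, 2n-2, n-2, n-1)` and a symmetric `[α]`-Hadamard matrix of even order `ζ` with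
`ζ > (√2+1)(2n-1)(4αn-4α+1)`. Then `M_ζ(K_{2, (ζ+α)(n-1)+1}; 2) = 4n-2`. -/
theorem statement4 (n ζ α : ℕ) (hn : 2 ≤ n)
    (hSRG : ∃ (V : Type) (_ : Fintype V) (G : SimpleGraph V) (_ : DecidableRel G.Adj),
      G.IsSRGWith (4 * n - 3) (2 * n - 2) (n - 2) (n - 1))
    (hHad : ∃ H : Matrix (Fin ζ) (Fin ζ) ℤ, H.IsSymm ∧ IsBHadamard α H)
    (hζeven : Even ζ)
    (hζbig : (ζ : ℝ) >
      (Real.sqrt 2 + 1) * (2 * (n : ℝ) - 1) * (4 * (α : ℝ) * n - 4 * α + 1)) :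
    setRamsey ζ ((ζ + α) * (n - 1) + 1) 2 = 4 * n - 2 := by
  obtain ⟨V, instV, G, instG, hG⟩ := hSRG
  obtain ⟨H, hsym, hpm, hα⟩ := hHad
  have hζnat : 2*(2*n-1)*(4*α*(n-1)+1) < ζ := by
    have h1 : (1:ℝ) ≤ Real.sqrt 2 := by
      rw [← Real.sqrt_one]
      exact Real.sqrt_le_sqrt (by norm_num)
    have hn' : (2:ℝ) ≤ (n:ℝ) := by exact_mod_cast hn
    have ha0 : (0:ℝ) ≤ (α:ℝ) := Nat.cast_nonneg α
    have hcast : ((2*(2*n-1)*(4*α*(n-1)+1) : ℕ) : ℝ)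
        = 2*(2*(n:ℝ)-1)*(4*(α:ℝ)*((n:ℝ)-1)+1) := by
      push_cast [Nat.cast_sub (by omega : 1 ≤ 2*n), Nat.cast_sub (by omega : 1 ≤ n)]
      ring
    rw [← Nat.cast_lt (α := ℝ), hcast]
    have hXr : (0:ℝ) ≤ 4*(α:ℝ)*(n:ℝ)-4*(α:ℝ)+1 := by
      nlinarith [mul_nonneg ha0 (by linarith : (0:ℝ) ≤ (n:ℝ)-1)]
    have hbound : 2*(2*(n:ℝ)-1)*(4*(α:ℝ)*((n:ℝ)-1)+1)
        ≤ (Real.sqrt 2 + 1) * (2*(n:ℝ)-1) * (4*(α:ℝ)*(n:ℝ)-4*(α:ℝ)+1) := by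
      have e1 : 4*(α:ℝ)*((n:ℝ)-1)+1 = 4*(α:ℝ)*(n:ℝ)-4*(α:ℝ)+1 := by ring
      rw [e1]
      apply mul_le_mul_of_nonneg_right _ hXr
      apply mul_le_mul_of_nonneg_right _ (by linarith : (0:ℝ) ≤ 2*(n:ℝ)-1)
      linarith
    linarith [hζbig]
  have hup : Arrows (4*n-2) ζ ((ζ+α)*(n-1)+1) 2 := arrows_upper n ζ α hn hζeven hζnat
  have hmem : (4*n-2) ∈ {c : ℕ | 0 < c ∧ Arrows c ζ ((ζ+α)*(n-1)+1) 2} :=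
    ⟨by omega, hup⟩
  show sInf {c : ℕ | 0 < c ∧ Arrows c ζ ((ζ+α)*(n-1)+1) 2} = 4*n-2
  refine le_antisymm (Nat.sInf_le hmem) (le_csInf ⟨_, hmem⟩ ?_)
  rintro c ⟨hc0, hA⟩
  by_contra hlt
  push_neg at hlt
  have hc : c ≤ 4*n-3 := by omega
  exact notArrows hn hc G hG hsym hpm hα hA
end

section
/- Let α and ζ be non-negative integers with α ≤ ζ/2. If there exists a Hadamard matrix of order ζ, then there exists an [α]-Hadamard matrix of order ζ−α. -/
open Finset Matrix

/-- **Theorem.** Let `α, ζ` be non-negative integers with `α ≤ ζ/2`. If there exists a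
Hadamard matrix of order `ζ`, then there exists an `[α]`-Hadamard matrix of order `ζ - α`. -/
theorem statement5 (α ζ : ℕ) (hαζ : (α : ℚ) ≤ (ζ : ℚ) / 2)
    (hHad : ∃ H : Matrix (Fin ζ) (Fin ζ) ℤ, _root_.IsHadamard H) :
    ∃ H' : Matrix (Fin (ζ - α)) (Fin (ζ - α)) ℤ, IsBHadamard α H' := by
 classical
  obtain ⟨H, hpm, hHH⟩ := hHad
  have hαle : α ≤ ζ := by
    have : (α : ℚ) ≤ (ζ : ℚ) := le_trans hαζ (by
      have : (0:ℚ) ≤ (ζ:ℚ) := by positivity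
      linarith)
    exact_mod_cast this
  have hle : ζ - α ≤ ζ := Nat.sub_le ζ α
  set e : Fin (ζ - α) → Fin ζ := Fin.castLE hle with he
  refine ⟨H.submatrix e e, fun i j => hpm (e i) (e j), ?_⟩
  intro i j hij
  have heij : e i ≠ e j := fun h => hij (Fin.castLE_injective hle h)
  -- full orthogonality
  have horth : ∑ k : Fin ζ, H (e i) k * H (e j) k = 0 := by
    have := congrFun (congrFun hHH (e i)) (e j)
    simp only [Matrix.mul_apply, Matrix.transpose_apply, Matrix.smul_apply,
      Matrix.one_apply_ne heij, smul_zero] at this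
    exact this
  set f : Fin ζ → ℤ := fun k => H (e i) k * H (e j) k with hf
  set S : Finset (Fin ζ) := Finset.univ.filter (fun k => (k : ℕ) < ζ - α) with hS
  have hSmap : S = Finset.univ.map (Fin.castLEEmb hle) := by
    ext x
    simp only [hS, Finset.mem_filter, Finset.mem_univ, true_and, Finset.mem_map,
      Fin.castLEEmb_apply]
    constructor
    · intro hx; exact ⟨⟨(x : ℕ), hx⟩, Fin.ext rfl⟩
    · rintro ⟨y, rfl⟩; exact y.isLt
  have hSsum : ∑ k ∈ S, f k = ∑ k : Fin (ζ - α), f (e k) := by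
    rw [hSmap, Finset.sum_map]
    rfl
  have hcardS : S.card = ζ - α := by rw [hSmap]; simp
  have hentry : (H.submatrix e e * (H.submatrix e e)ᵀ) i j = ∑ k ∈ S, f k := by
    rw [hSsum]
    simp [Matrix.mul_apply, Matrix.transpose_apply, hf]
  rw [hentry]
  have hsplit : ∑ k ∈ S, f k = - ∑ k ∈ Sᶜ, f k := by
    have := Finset.sum_add_sum_compl S f
    rw [horth] at this
    linarith
  rw [hsplit, abs_neg]
  calc |∑ k ∈ Sᶜ, f k| ≤ ∑ k ∈ Sᶜ, |f k| := Finset.abs_sum_le_sum_abs _ _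
    _ ≤ ∑ _k ∈ Sᶜ, (1 : ℤ) := by
        refine Finset.sum_le_sum (fun k _ => ?_)
        rcases hpm (e i) k with h1 | h1 <;> rcases hpm (e j) k with h2 | h2 <;>
          simp [hf, h1, h2]
    _ = (Sᶜ.card : ℤ) := by simp
    _ ≤ (α : ℤ) := by
        have : Sᶜ.card = ζ - (ζ - α) := by
          rw [Finset.card_compl, hcardS]; simp
        rw [this, Nat.sub_sub_self hαle]
end

section
/- Let p be a prime number and α > 0 an integer with p^α ≡ 3 (mod 4). Then there exists a 1-Hadamard matrix of order p^α; in fact the matrix H = I + Q, where Q(i,j) = χ(a_i − a_j) is the Paley matrix built from the quadratic character χ of GF(p^α), satisfies H·Hᵗ = (p^α + 1)·I − J, where J is the all-ones matrix, so every off-diagonal entry of H·Hᵗ equals −1. -/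
open Finset Matrix

/-- The Paley matrix of a finite field `F`: `Q i j = χ(i - j)` where `χ` is the quadratic
character of `F`. -/
def paleyMatrix (F : Type*) [Field F] [Fintype F] [DecidableEq F] : Matrix F F ℤ :=
  Matrix.of fun i j => quadraticChar F (i - j)


section paleyAux
variable {F : Type} [Field F] [Fintype F] [DecidableEq F]

lemma char_sum (hF : ringChar F ≠ 2) {b : F} (hb : b ≠ 0) :
    ∑ a : F, quadraticChar F a * quadraticChar F (a + b) = -1 := by
  have h0 : (0:F) ∈ (univ : Finset F) := mem_univ _
  rw [← Finset.sum_erase_add _ _ h0]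
  simp only [quadraticChar_zero, Int.cast_zero, zero_mul, add_zero]
  have h1 : ∀ a ∈ (univ : Finset F).erase 0,
      (quadraticChar F a : ℤ) * quadraticChar F (a + b)
        = quadraticChar F (1 + b * a⁻¹) := by
    intro a ha
    have ha0 : a ≠ 0 := (Finset.mem_erase.mp ha).1
    rw [← _root_.map_mul]
    have ha2 : a * (a + b) = (a * a) * (1 + b * a⁻¹) := by field_simp
    rw [ha2, _root_.map_mul, _root_.map_mul]
    have hsq : (quadraticChar F a : ℤ) * quadraticChar F a = 1 := by
      have := quadraticChar_sq_one (F := F) ha0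
      rwa [sq] at this
    rw [hsq, one_mul]
  rw [Finset.sum_congr rfl h1]
  have hbij : ∑ a ∈ (univ : Finset F).erase 0, (quadraticChar F (1 + b * a⁻¹) : ℤ)
      = ∑ c ∈ (univ : Finset F).erase 1, (quadraticChar F c : ℤ) := by
    refine Finset.sum_nbij' (fun a => 1 + b * a⁻¹) (fun c => b * (c - 1)⁻¹) ?_ ?_ ?_ ?_ ?_
    · intro a ha
      have ha0 : a ≠ 0 := (Finset.mem_erase.mp ha).1
      refine Finset.mem_erase.mpr ⟨?_, mem_univ _⟩
      intro h
      have : b * a⁻¹ = 0 := by linear_combination h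
      rcases mul_eq_zero.mp this with h' | h'
      · exact hb h'
      · exact ha0 (inv_eq_zero.mp h')
    · intro c hc
      have hc1 : c ≠ 1 := (Finset.mem_erase.mp hc).1
      refine Finset.mem_erase.mpr ⟨?_, mem_univ _⟩
      have : c - 1 ≠ 0 := sub_ne_zero.mpr hc1
      exact mul_ne_zero hb (inv_ne_zero this)
    · intro a ha
      have ha0 : a ≠ 0 := (Finset.mem_erase.mp ha).1
      field_simp
      simp [hb]
    · intro c hc
      have hc1 : c ≠ 1 := (Finset.mem_erase.mp hc).1
      have : c - 1 ≠ 0 := sub_ne_zero.mpr hc1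
      field_simp
      ring
    · intro a ha; rfl
  rw [hbij]
  have := Finset.sum_erase_add (univ : Finset F)
    (fun c => (quadraticChar F c : ℤ)) (mem_univ (1:F))
  rw [quadraticChar_sum_zero hF] at this
  simp only [MulChar.map_one] at this
  linarith


lemma HH_apply (hmod4 : Fintype.card F % 4 = 3) (i j : F) :
    ((1 + paleyMatrix F) * (1 + paleyMatrix F)ᵀ : Matrix F F ℤ) i j
      = if i = j then (Fintype.card F : ℤ) else -1 := by
  have hF : ringChar F ≠ 2 := by
    intro h
    have := FiniteField.even_card_of_char_two (F := F) h
    omega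
  have hneg : (quadraticChar F (-1) : ℤ) = -1 := by
    rw [quadraticChar_neg_one hF, ZMod.χ₄_nat_eq_if_mod_four]
    have h2 : Fintype.card F % 2 = 1 := by omega
    simp [h2, hmod4]
  have hent : ∀ a b : F, (1 + paleyMatrix F) a b
      = (if a = b then 1 else 0) + quadraticChar F (a - b) := by
    intro a b
    simp [paleyMatrix, Matrix.add_apply, Matrix.one_apply]
  rw [Matrix.mul_apply]
  simp only [Matrix.transpose_apply, hent]
  by_cases hij : i = j
  · subst hij
    simp only [if_pos rfl]
    rw [← Finset.sum_erase_add _ _ (mem_univ i)]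
    have h1 : ∀ k ∈ (univ : Finset F).erase i,
        ((if i = k then (1:ℤ) else 0) + quadraticChar F (i - k))
          * ((if i = k then (1:ℤ) else 0) + quadraticChar F (i - k)) = 1 := by
      intro k hk
      have hki : i ≠ k := fun h => (Finset.mem_erase.mp hk).1 h.symm
      rw [if_neg hki, zero_add, ← sq]
      exact quadraticChar_sq_one (sub_ne_zero.mpr hki)
    rw [Finset.sum_congr rfl h1, Finset.sum_const, Finset.card_erase_of_mem (mem_univ i),
      Finset.card_univ]
    simp only [if_pos rfl, sub_self, quadraticChar_zero, Int.cast_zero]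
    have hc : 1 ≤ Fintype.card F := Fintype.card_pos
    simp only [if_true, nsmul_eq_mul, Nat.cast_sub hc]
    push_cast
    ring
  · rw [if_neg hij]
    have expand : ∀ k : F,
        ((if i = k then (1:ℤ) else 0) + quadraticChar F (i - k))
          * ((if j = k then (1:ℤ) else 0) + quadraticChar F (j - k))
        = (if i = k then (1:ℤ) else 0) * (if j = k then (1:ℤ) else 0)
          + (if i = k then (quadraticChar F (j - k) : ℤ) else 0)
          + (if j = k then (quadraticChar F (i - k) : ℤ) else 0)
          + quadraticChar F (i - k) * quadraticChar F (j - k) := by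
      intro k; split_ifs <;> ring
    rw [Finset.sum_congr rfl (fun k _ => expand k)]
    rw [Finset.sum_add_distrib, Finset.sum_add_distrib, Finset.sum_add_distrib]
    have s1 : ∑ k : F, (if i = k then (1:ℤ) else 0) * (if j = k then (1:ℤ) else 0) = 0 := by
      apply Finset.sum_eq_zero
      intro k _
      by_cases h1 : i = k
      · by_cases h2 : j = k
        · exact absurd (h1.trans h2.symm) hij
        · simp [h1, h2]
      · simp [h1]
    have s2 : ∑ k : F, (if i = k then (quadraticChar F (j - k) : ℤ) else 0)
        = quadraticChar F (j - i) := by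
      rw [Finset.sum_ite_eq]; exact if_pos (mem_univ _)
    have s3 : ∑ k : F, (if j = k then (quadraticChar F (i - k) : ℤ) else 0)
        = quadraticChar F (i - j) := by
      rw [Finset.sum_ite_eq]; exact if_pos (mem_univ _)
    have s4 : ∑ k : F, (quadraticChar F (i - k) : ℤ) * quadraticChar F (j - k) = -1 := by
      have := Fintype.sum_equiv (Equiv.subLeft i)
        (fun k => (quadraticChar F (i - k) : ℤ) * quadraticChar F (j - k))
        (fun a => (quadraticChar F a : ℤ) * quadraticChar F (a + (j - i)))
        (fun k => by simp [Equiv.subLeft])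
      rw [this]
      exact char_sum hF (sub_ne_zero.mpr (Ne.symm hij))
    have s5 : (quadraticChar F (j - i) : ℤ) = - quadraticChar F (i - j) := by
      rw [show j - i = -1 * (i - j) by ring, _root_.map_mul, hneg]
      ring
    rw [s1, s2, s3, s4, s5]
    ring

end paleyAux

/-- **Theorem.** Let `p` be a prime and `α > 0` with `p^α ≡ 3 (mod 4)`. Then there exists a
`1`-Hadamard matrix of order `p^α`; in fact, for `F = GF(p^α)` the matrix `H = I + Q`, where `Q`
is the Paley matrix of `F`, satisfies `H * Hᵀ = (p^α + 1) • I - J` (with `J` the all-ones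
matrix); in particular every off-diagonal entry of `H * Hᵀ` equals `-1`. -/

theorem statement7 (p : ℕ) (hp : p.Prime) (α : ℕ) (hα : 0 < α) (hmod : p ^ α % 4 = 3)
    (F : Type) [Field F] [Fintype F] [DecidableEq F] (hF : Fintype.card F = p ^ α) :
    (∃ H : Matrix (Fin (p ^ α)) (Fin (p ^ α)) ℤ, IsEHadamard 1 H) ∧
    IsEHadamard 1 (1 + paleyMatrix F) ∧
    ((1 + paleyMatrix F) * (1 + paleyMatrix F)ᵀ =
      ((p ^ α : ℤ) + 1) • (1 : Matrix F F ℤ) - Matrix.of fun _ _ => (1 : ℤ)) ∧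
    (∀ i j : F, i ≠ j → ((1 + paleyMatrix F) * (1 + paleyMatrix F)ᵀ : Matrix F F ℤ) i j = -1) := by
  have hq : Fintype.card F % 4 = 3 := by rw [hF]; exact hmod
  have hHH := fun i j => HH_apply (F := F) hq i j
  have hcast : ((Fintype.card F : ℤ)) = (p : ℤ) ^ α := by exact_mod_cast congrArg (Nat.cast (R := ℤ)) hF
  have hcard2 : 1 < Fintype.card F := by omega
  have hpm : PMOne (1 + paleyMatrix F) := by
    intro i j
    by_cases h : i = j
    · left; subst h
      simp [paleyMatrix, Matrix.add_apply, Matrix.one_apply]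
    · have hent : (1 + paleyMatrix F) i j
          = (if i = j then (1:ℤ) else 0) + quadraticChar F (i - j) := by
        simp [paleyMatrix, Matrix.add_apply, Matrix.one_apply]
      rcases quadraticChar_dichotomy (F := F) (sub_ne_zero.mpr h) with h' | h'
      · left; rw [hent, if_neg h, zero_add]; exact h'
      · right; rw [hent, if_neg h, zero_add]; exact h'
  have hE : IsEHadamard 1 (1 + paleyMatrix F) := by
    refine ⟨⟨hpm, fun i j hij => by rw [hHH i j, if_neg hij]; norm_num⟩, ?_⟩
    obtain ⟨i, j, hij⟩ := Fintype.exists_pair_of_one_lt_card hcard2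
    exact ⟨i, j, hij, by rw [hHH i j, if_neg hij]; norm_num⟩
  refine ⟨?_, hE, ?_, fun i j hij => by rw [hHH i j, if_neg hij]⟩
  · set e : Fin (p ^ α) ≃ F := (Fintype.equivFinOfCardEq hF).symm with he
    refine ⟨(1 + paleyMatrix F).submatrix e e, ?_⟩
    have key : ∀ i j, (((1 + paleyMatrix F).submatrix e e)
        * ((1 + paleyMatrix F).submatrix e e)ᵀ) i j
          = ((1 + paleyMatrix F) * (1 + paleyMatrix F)ᵀ : Matrix F F ℤ) (e i) (e j) := by
      intro i j
      rw [Matrix.transpose_submatrix, Matrix.submatrix_mul_equiv]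
      rfl
    refine ⟨⟨fun i j => hpm (e i) (e j), fun i j hij => ?_⟩, ?_⟩
    · rw [key, hHH, if_neg (fun h => hij (e.injective h))]; norm_num
    · have h2 : 1 < Fintype.card (Fin (p ^ α)) := by rw [Fintype.card_fin, ← hF]; exact hcard2
      obtain ⟨i, j, hij⟩ := Fintype.exists_pair_of_one_lt_card h2
      refine ⟨i, j, hij, ?_⟩
      rw [key, hHH, if_neg (fun h => hij (e.injective h))]; norm_num
  · ext i j
    rw [hHH i j]
    simp only [Matrix.sub_apply, Matrix.smul_apply, Matrix.one_apply, Matrix.of_apply,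
      smul_eq_mul]
    split_ifs with h
    · rw [hcast]; ring
    · ring
end

section
/- Let p be a prime number and α > 0 an integer with p^α ≡ 1 (mod 4). Then there exists a [4]-Hadamard matrix of order 2p^α, namely the matrix H = Q⊗[[1,1],[1,−1]] + I⊗[[1,−1],[−1,−1]], where Q(i,j) = χ(a_i − a_j) is the Paley matrix built from the quadratic character χ of GF(p^α) and ⊗ denotes the Kronecker product: every off-diagonal entry of H·Hᵗ has absolute value at most 4. -/
open Finset Matrix

open Kronecker

section aux
variable {F : Type} [Field F] [Fintype F] [DecidableEq F]

lemma aux_char_ne_two (h : Fintype.card F % 4 = 1) : ringChar F ≠ 2 := by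
  intro h2
  have := FiniteField.even_card_of_char_two h2
  omega

lemma aux_chi_neg (h : Fintype.card F % 4 = 1) (x : F) :
    quadraticChar F (-x) = quadraticChar F x := by
  have : (-x) = (-1) * x := by ring
  rw [this, _root_.map_mul, quadraticChar_neg_one (aux_char_ne_two h), ZMod.χ₄_nat_one_mod_four h,
    one_mul]

lemma aux_key (h : Fintype.card F % 4 = 1) {a : F} (ha : a ≠ 0) :
    ∑ t : F, quadraticChar F t * quadraticChar F (t + a) = -1 := by
  have hchar := aux_char_ne_two (F := F) h
  have h1 : ∑ t : F, quadraticChar F t * quadraticChar F (t + a)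
      = ∑ t ∈ univ \ {(0 : F)}, quadraticChar F (1 + a * t⁻¹) := by
    rw [← Finset.sum_subset (Finset.sdiff_subset (s := univ) (t := {(0:F)}))]
    · apply Finset.sum_congr rfl
      intro t ht
      simp only [mem_sdiff, mem_singleton] at ht
      have ht0 : t ≠ 0 := ht.2
      have : t + a = t * (1 + a * t⁻¹) := by field_simp
      rw [this, _root_.map_mul, ← mul_assoc, ← _root_.map_mul, ← sq, quadraticChar_sq_one' ht0, one_mul]
    · intro t _ ht
      simp only [mem_sdiff, mem_univ, true_and, mem_singleton, not_not] at ht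
      rw [ht, quadraticChar_zero, zero_mul]
  rw [h1]
  have h2 : ∑ t ∈ univ \ {(0 : F)}, quadraticChar F (1 + a * t⁻¹)
      = ∑ u ∈ univ \ {(1 : F)}, quadraticChar F u := by
    apply Finset.sum_nbij' (fun t => 1 + a * t⁻¹) (fun u => a * (u - 1)⁻¹)
    · intro t ht
      simp only [mem_sdiff, mem_univ, true_and, mem_singleton] at ht ⊢
      intro hc
      have : a * t⁻¹ = 0 := by linear_combination hc
      rcases mul_eq_zero.mp this with h' | h'
      · exact ha h'
      · exact ht (inv_eq_zero.mp h' ▸ rfl)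
    · intro u hu
      simp only [mem_sdiff, mem_univ, true_and, mem_singleton] at hu ⊢
      intro hc
      rcases mul_eq_zero.mp hc with h' | h'
      · exact ha h'
      · exact hu (by
          have h2 : u - 1 = 0 := inv_eq_zero.mp h'
          have := sub_eq_zero.mp h2
          simpa using this)
    · intro t ht
      simp only [mem_sdiff, mem_univ, true_and, mem_singleton] at ht
      field_simp
      rw [add_sub_cancel_left, div_self ha]
    · intro u hu
      simp only [mem_sdiff, mem_univ, true_and, mem_singleton] at hu
      have h1 : u - 1 ≠ 0 := sub_ne_zero.mpr hu
      field_simp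
      ring
    · intros; rfl
  rw [h2, Finset.sum_sdiff_eq_sub (by simp), quadraticChar_sum_zero hchar]
  simp

lemma aux_S (h : Fintype.card F % 4 = 1) {i j : F} (hij : i ≠ j) :
    ∑ k : F, (quadraticChar F (i - k) : ℤ) * quadraticChar F (j - k) = -1 := by
  have heq : ∀ t : F, (quadraticChar F (i - t) : ℤ) * quadraticChar F (j - t)
      = (fun u => (quadraticChar F u : ℤ) * quadraticChar F (u + (j - i))) (Equiv.subLeft i t) := by
    intro t
    have h2 : j - t = (i - t) + (j - i) := by ring
    rw [h2]
    simp only [Equiv.subLeft_apply]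
  rw [Fintype.sum_equiv (Equiv.subLeft i) _
    (fun u => (quadraticChar F u : ℤ) * quadraticChar F (u + (j - i))) heq]
  have := aux_key h (a := j - i) (sub_ne_zero.mpr (Ne.symm hij))
  push_cast
  exact_mod_cast congrArg (Int.cast) this
end aux

section main2
variable {F : Type} [Field F] [Fintype F] [DecidableEq F]

lemma aux_Hval (i k : F) (a c : Fin 2) :
    ((paleyMatrix F ⊗ₖ !![1, 1; 1, -1] + (1 : Matrix F F ℤ) ⊗ₖ !![1, -1; -1, -1]) :
      Matrix (F × Fin 2) (F × Fin 2) ℤ) (i, a) (k, c)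
    = (quadraticChar F (i - k) : ℤ) * !![1, 1; 1, -1] a c
      + (if i = k then 1 else 0) * !![1, -1; -1, -1] a c := by
  simp [paleyMatrix, Matrix.add_apply, Matrix.kroneckerMap_apply, Matrix.one_apply]

lemma aux_main (h : Fintype.card F % 4 = 1) :
    IsBHadamard 4 (paleyMatrix F ⊗ₖ !![1, 1; 1, -1] +
      (1 : Matrix F F ℤ) ⊗ₖ !![1, -1; -1, -1]) := by
  set H := paleyMatrix F ⊗ₖ !![1, 1; 1, -1] + (1 : Matrix F F ℤ) ⊗ₖ !![(1:ℤ), -1; -1, -1] with hH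
  constructor
  · rintro ⟨i, a⟩ ⟨k, c⟩
    rw [hH, aux_Hval]
    by_cases hik : i = k
    · subst hik
      simp only [sub_self, quadraticChar_zero, if_pos rfl]
      push_cast
      fin_cases a <;> fin_cases c <;> norm_num
    · rcases quadraticChar_dichotomy (sub_ne_zero.mpr hik) with hq | hq <;>
        rw [if_neg hik, hq] <;> fin_cases a <;> fin_cases c <;> norm_num
  · rintro ⟨i, a⟩ ⟨j, b⟩ hne
    have hms : (H * Hᵀ) (i, a) (j, b)
        = ∑ k : F, (H (i, a) (k, 0) * H (j, b) (k, 0) + H (i, a) (k, 1) * H (j, b) (k, 1)) := by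
      rw [Matrix.mul_apply, Fintype.sum_prod_type]
      simp [Fin.sum_univ_two, Matrix.transpose_apply]
    simp only [hH] at hms
    have hD : ∀ (hij : i ≠ j),
        ∑ k : F, (if i = k then (1:ℤ) else 0) * (if j = k then (1:ℤ) else 0) = 0 := by
      intro hij
      simp [mul_ite, Finset.sum_ite_eq, hij]
    have hE : (∑ k : F, (quadraticChar F (i - k) : ℤ) * (if j = k then (1:ℤ) else 0))
        = quadraticChar F (i - j) := by
      simp [mul_ite, Finset.sum_ite_eq]
    have hE2 : (∑ k : F, (if i = k then (1:ℤ) else 0) * (quadraticChar F (j - k) : ℤ))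
        = quadraticChar F (j - i) := by
      simp [ite_mul, Finset.sum_ite_eq]
    have hsym : (quadraticChar F (j - i) : ℤ) = quadraticChar F (i - j) := by
      rw [show j - i = -(i - j) by ring, aux_chi_neg h]
    rw [hms]
    simp only [aux_Hval]
    by_cases hab : a = b
    · subst hab
      have hij : i ≠ j := by rintro rfl; exact hne rfl
      have hsum : ∑ k : F, (((quadraticChar F (i - k) : ℤ) * !![1, 1; 1, -1] a 0
            + (if i = k then 1 else 0) * !![1, -1; -1, -1] a 0)
          * ((quadraticChar F (j - k) : ℤ) * !![1, 1; 1, -1] a 0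
            + (if j = k then 1 else 0) * !![1, -1; -1, -1] a 0)
          + ((quadraticChar F (i - k) : ℤ) * !![1, 1; 1, -1] a 1
            + (if i = k then 1 else 0) * !![1, -1; -1, -1] a 1)
          * ((quadraticChar F (j - k) : ℤ) * !![1, 1; 1, -1] a 1
            + (if j = k then 1 else 0) * !![1, -1; -1, -1] a 1))
          = ∑ k : F, (2 * ((quadraticChar F (i - k) : ℤ) * quadraticChar F (j - k))
            + 2 * ((if i = k then (1:ℤ) else 0) * (if j = k then (1:ℤ) else 0))) := by
        refine Finset.sum_congr rfl fun k _ => ?_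
        fin_cases a <;> norm_num <;> split_ifs <;> ring
      rw [hsum, Finset.sum_add_distrib, ← Finset.mul_sum, ← Finset.mul_sum, aux_S h hij,
        hD hij]
      norm_num
    · have hsum : ∑ k : F, (((quadraticChar F (i - k) : ℤ) * !![1, 1; 1, -1] a 0
            + (if i = k then 1 else 0) * !![1, -1; -1, -1] a 0)
          * ((quadraticChar F (j - k) : ℤ) * !![1, 1; 1, -1] b 0
            + (if j = k then 1 else 0) * !![1, -1; -1, -1] b 0)
          + ((quadraticChar F (i - k) : ℤ) * !![1, 1; 1, -1] a 1
            + (if i = k then 1 else 0) * !![1, -1; -1, -1] a 1)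
          * ((quadraticChar F (j - k) : ℤ) * !![1, 1; 1, -1] b 1
            + (if j = k then 1 else 0) * !![1, -1; -1, -1] b 1))
          = ∑ k : F, ((if a = 0 then (-2:ℤ) else 2) * ((quadraticChar F (i - k) : ℤ)
              * (if j = k then (1:ℤ) else 0))
            + (if a = 0 then (2:ℤ) else -2) * ((if i = k then (1:ℤ) else 0)
              * (quadraticChar F (j - k) : ℤ))) := by
        refine Finset.sum_congr rfl fun k _ => ?_
        fin_cases a <;> fin_cases b <;>
          first | (exact absurd rfl hab) | (norm_num <;> split_ifs <;> ring)
      rw [hsum, Finset.sum_add_distrib, ← Finset.mul_sum, ← Finset.mul_sum, hE, hE2, hsym]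
      split <;> norm_num

end main2

/-- **Theorem.** Let `p` be a prime and `α > 0` with `p^α ≡ 1 (mod 4)`. Then there exists a
`[4]`-Hadamard matrix of order `2p^α`, namely (for `F = GF(p^α)` with Paley matrix `Q`) the
matrix `H = Q ⊗ [[1,1],[1,-1]] + I ⊗ [[1,-1],[-1,-1]]`: every entry of `H` is `±1` and every
off-diagonal entry of `H * Hᵀ` has absolute value at most `4`. -/
theorem statement8 (p : ℕ) (hp : p.Prime) (α : ℕ) (hα : 0 < α) (hmod : p ^ α % 4 = 1)
    (F : Type) [Field F] [Fintype F] [DecidableEq F] (hF : Fintype.card F = p ^ α) :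
    (∃ H : Matrix (Fin (2 * p ^ α)) (Fin (2 * p ^ α)) ℤ, IsBHadamard 4 H) ∧
    IsBHadamard 4 (paleyMatrix F ⊗ₖ !![1, 1; 1, -1] +
      (1 : Matrix F F ℤ) ⊗ₖ !![1, -1; -1, -1]) := by
  have hcard : Fintype.card F % 4 = 1 := by rw [hF]; exact hmod
  have main := aux_main (F := F) hcard
  refine ⟨?_, main⟩
  have hc : Fintype.card (F × Fin 2) = 2 * p ^ α := by
    simp only [Fintype.card_prod, Fintype.card_fin, hF]
    ring
  let e := Fintype.equivFinOfCardEq hc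
  set H := paleyMatrix F ⊗ₖ !![(1:ℤ), 1; 1, -1] +
      (1 : Matrix F F ℤ) ⊗ₖ !![(1:ℤ), -1; -1, -1] with hH
  refine ⟨H.submatrix e.symm e.symm, fun i j => main.1 _ _, fun i j hij => ?_⟩
  have key : (H.submatrix ⇑e.symm ⇑e.symm * (H.submatrix ⇑e.symm ⇑e.symm)ᵀ) i j
      = (H * Hᵀ) (e.symm i) (e.symm j) := by
    rw [Matrix.transpose_submatrix, Matrix.submatrix_mul_equiv]
    rfl
  rw [key]
  exact main.2 _ _ (fun hc2 => hij (by simpa using congrArg e hc2))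
end

section
/- Let G be a strongly regular graph with parameters (n,k,λ,μ) that contains at least one pair of adjacent vertices and at least one pair of distinct non-adjacent vertices. Then θ = max{k/2, λ, μ, (n−k−1)/2, n−2−2k+μ, n−2k+λ} is an integer. -/
open Finset Matrix

private lemma aux1 (t K L Mu M : ℤ) (ht : 1 ≤ t) (hK : K = 2*t+1) (hM1 : 1 ≤ M) (hMK : M ≤ K)
    (hL : L ≤ t) (hMu : Mu ≤ t) (hF : M + L ≤ 3*t) (hid : K*(K-L-1) = M*Mu) : False := by
  have e : K*(K-L-1-t) + (K-M)*t + M*(t-Mu) = 0 := by linear_combination hid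
  have h1 : 0 ≤ K*(K-L-1-t) := mul_nonneg (by omega) (by omega)
  have h2 : 0 ≤ (K-M)*t := mul_nonneg (by omega) (by omega)
  have h3 : 0 ≤ M*(t-Mu) := mul_nonneg (by omega) (by omega)
  have h2eq : (K-M)*t = 0 := le_antisymm (by linarith) h2
  rcases mul_eq_zero.1 h2eq with h | h
  · have hM : M = K := by omega
    subst hM
    have h4 : M * (M - L - 1 - Mu) = 0 := by linear_combination e
    rcases mul_eq_zero.1 h4 with h' | h' <;> omega
  · omega

/-- **Lemma.** Let `G` be a strongly regular graph with parameters `(n,k,ℓ,μ)` that has at least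
one pair of adjacent vertices and at least one pair of distinct non-adjacent vertices. Then
`θ = max {k/2, ℓ, μ, (n-k-1)/2, n-2-2k+μ, n-2k+ℓ}` (taken in `ℚ`) is an integer. -/
theorem statement13 {V : Type*} [Fintype V] (G : SimpleGraph V) [DecidableRel G.Adj]
    (n k ℓ μ : ℕ) (hG : G.IsSRGWith n k ℓ μ)
    (hadj : ∃ a b : V, G.Adj a b)
    (hnadj : ∃ a b : V, a ≠ b ∧ ¬G.Adj a b) :
    ∃ z : ℤ, max (max (max ((k : ℚ) / 2) (ℓ : ℚ)) (max ((μ : ℚ)) (((n : ℚ) - k - 1) / 2)))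
      (max ((n : ℚ) - 2 - 2 * k + μ) ((n : ℚ) - 2 * k + ℓ)) = (z : ℚ) := by
  classical
  obtain ⟨a, b, hab⟩ := hadj
  obtain ⟨c, d, hcd, hncd⟩ := hnadj
  have hk1 : 1 ≤ k := by
    have h : (G.neighborFinset a).card = k := hG.regular a
    have hb : b ∈ G.neighborFinset a := by simpa using hab
    have := Finset.card_pos.2 ⟨b, hb⟩
    omega
  have hlk : ℓ + 1 ≤ k := by
    have hcomm := hG.of_adj a b hab
    have hbn : b ∉ (G.commonNeighbors a b).toFinset := by
      rw [Set.mem_toFinset]; simp [SimpleGraph.mem_commonNeighbors]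
    have hsub : insert b (G.commonNeighbors a b).toFinset ⊆ G.neighborFinset a := by
      intro x hx
      rcases Finset.mem_insert.1 hx with h | h
      · subst h; simpa using hab
      · simp only [Set.mem_toFinset, SimpleGraph.mem_commonNeighbors] at h
        simpa using h.1
    have hcard := Finset.card_le_card hsub
    rw [Finset.card_insert_of_notMem hbn, Set.toFinset_card, hcomm] at hcard
    have h : (G.neighborFinset a).card = k := hG.regular a
    omega
  have hn2 : k + 2 ≤ n := by
    have hdn : d ∉ insert c (G.neighborFinset c) := by
      simp [hcd.symm, hncd]
    have hcn : c ∉ G.neighborFinset c := by simp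
    have hcard := Finset.card_le_card (Finset.subset_univ (insert d (insert c (G.neighborFinset c))))
    rw [Finset.card_insert_of_notMem hdn, Finset.card_insert_of_notMem hcn,
      Finset.card_univ, hG.card] at hcard
    have h : (G.neighborFinset c).card = k := hG.regular c
    omega
  have hid := hG.param_eq G (by omega)
  have hidZ : (k:ℤ) * ((k:ℤ) - ℓ - 1) = ((n:ℤ) - k - 1) * μ := by
    zify [show ℓ ≤ k by omega, show 1 ≤ k - ℓ by omega,
      show k ≤ n by omega, show 1 ≤ n - k by omega] at hid
    linarith
  set A : ℚ := (k : ℚ) / 2 with hA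
  set B : ℚ := (ℓ : ℚ) with hB
  set C : ℚ := (μ : ℚ) with hC
  set D : ℚ := ((n : ℚ) - k - 1) / 2 with hD
  set E : ℚ := (n : ℚ) - 2 - 2 * k + μ with hE
  set F : ℚ := (n : ℚ) - 2 * k + ℓ with hF
  set M4 : ℚ := max (max B C) (max E F) with hM4
  have hre : max (max (max A B) (max C D)) (max E F) = max A (max D M4) := by
    rw [hM4]
    apply le_antisymm
    · refine max_le (max_le (max_le ?_ ?_) (max_le ?_ ?_)) (max_le ?_ ?_)
      · exact le_max_left _ _
      · exact le_max_of_le_right (le_max_of_le_right (le_max_of_le_left (le_max_left _ _)))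
      · exact le_max_of_le_right (le_max_of_le_right (le_max_of_le_left (le_max_right _ _)))
      · exact le_max_of_le_right (le_max_left _ _)
      · exact le_max_of_le_right (le_max_of_le_right (le_max_of_le_right (le_max_left _ _)))
      · exact le_max_of_le_right (le_max_of_le_right (le_max_of_le_right (le_max_right _ _)))
    · refine max_le ?_ (max_le ?_ (max_le (max_le ?_ ?_) (max_le ?_ ?_)))
      · exact le_max_of_le_left (le_max_of_le_left (le_max_left _ _))
      · exact le_max_of_le_left (le_max_of_le_right (le_max_right _ _))
      · exact le_max_of_le_left (le_max_of_le_left (le_max_right _ _))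
      · exact le_max_of_le_left (le_max_of_le_right (le_max_left _ _))
      · exact le_max_of_le_right (le_max_left _ _)
      · exact le_max_of_le_right (le_max_right _ _)
  rw [hre]
  -- integer form of M4
  have hM4Z : M4 = ((max (max (ℓ:ℤ) (μ:ℤ)) (max ((n:ℤ) - 2 - 2*k + μ) ((n:ℤ) - 2*k + ℓ)) : ℤ) : ℚ) := by
    rw [hM4, hB, hC, hE, hF]
    push_cast
    ring_nf
  rcases le_total A D with hAD | hDA
  · by_cases hDM : D ≤ M4
    · refine ⟨max (max (ℓ:ℤ) (μ:ℤ)) (max ((n:ℤ) - 2 - 2*k + μ) ((n:ℤ) - 2*k + ℓ)), ?_⟩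
      rw [max_eq_right hDM, max_eq_right (hAD.trans hDM)]
      exact hM4Z
    · push_neg at hDM
      -- D is the max; show n - k - 1 is even
      have hBD : B < D := (le_max_left _ _).trans_lt (by
        exact (le_max_left _ _).trans_lt hDM)
      have hCD : C < D := ((le_max_right B C).trans (le_max_left _ _)).trans_lt hDM
      have hED : E < D := ((le_max_left E F).trans (le_max_right _ _)).trans_lt hDM
      have hFD : F < D := ((le_max_right E F).trans (le_max_right _ _)).trans_lt hDM
      -- integer inequalities
      have hB2 : 2*(ℓ:ℤ) < (n:ℤ) - k - 1 := by
        have : 2*(ℓ:ℚ) < (n:ℚ) - k - 1 := by rw [hB, hD] at hBD; linarith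
        exact_mod_cast this
      have hC2 : 2*(μ:ℤ) < (n:ℤ) - k - 1 := by
        have : 2*(μ:ℚ) < (n:ℚ) - k - 1 := by rw [hC, hD] at hCD; linarith
        exact_mod_cast this
      have hE2 : 2*((n:ℤ) - 2 - 2*k + μ) < (n:ℤ) - k - 1 := by
        have : 2*((n:ℚ) - 2 - 2*k + μ) < (n:ℚ) - k - 1 := by rw [hE, hD] at hED; linarith
        exact_mod_cast this
      have hF2 : 2*((n:ℤ) - 2*k + ℓ) < (n:ℤ) - k - 1 := by
        have : 2*((n:ℚ) - 2*k + ℓ) < (n:ℚ) - k - 1 := by rw [hF, hD] at hFD; linarith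
        exact_mod_cast this
      have hkm : (k:ℤ) ≤ (n:ℤ) - k - 1 := by
        have : (k:ℚ) ≤ (n:ℚ) - k - 1 := by rw [hA, hD] at hAD; linarith
        exact_mod_cast this
      rcases Nat.even_or_odd (n - k - 1) with he | ho
      · obtain ⟨t, ht⟩ := he
        refine ⟨(t:ℤ), ?_⟩
        rw [max_eq_left hDM.le, max_eq_right hAD, hD]
        have hn' : n = k + 1 + (t + t) := by omega
        have hQ : (n:ℚ) = (k:ℚ) + 1 + ((t:ℚ) + t) := by exact_mod_cast congrArg (Nat.cast : ℕ → ℚ) hn'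
        rw [hQ]
        push_cast
        ring
      · obtain ⟨t, ht⟩ := ho
        exfalso
        have htZ : (n:ℤ) - k - 1 = 2*(t:ℤ) + 1 := by omega
        rcases Nat.eq_zero_or_pos t with ht0 | ht1
        · omega
        · exact aux1 (t:ℤ) ((n:ℤ) - k - 1) ((n:ℤ) - 2 - 2*k + μ) ((n:ℤ) - 2*k + ℓ) (k:ℤ)
            (by exact_mod_cast ht1) htZ (by exact_mod_cast hk1) hkm
            (by omega) (by omega) (by omega)
            (by linear_combination hidZ)
  · by_cases hAM : A ≤ M4
    · refine ⟨max (max (ℓ:ℤ) (μ:ℤ)) (max ((n:ℤ) - 2 - 2*k + μ) ((n:ℤ) - 2*k + ℓ)), ?_⟩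
      rw [max_eq_right (hDA.trans hAM), max_eq_right hAM]
      exact hM4Z
    · push_neg at hAM
      have hBA : B < A := ((le_max_left B C).trans (le_max_left _ _)).trans_lt hAM
      have hCA : C < A := ((le_max_right B C).trans (le_max_left _ _)).trans_lt hAM
      have hEA : E < A := ((le_max_left E F).trans (le_max_right _ _)).trans_lt hAM
      have hFA : F < A := ((le_max_right E F).trans (le_max_right _ _)).trans_lt hAM
      have hB2 : 2*(ℓ:ℤ) < (k:ℤ) := by
        have : 2*(ℓ:ℚ) < (k:ℚ) := by rw [hB, hA] at hBA; linarith
        exact_mod_cast this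
      have hC2 : 2*(μ:ℤ) < (k:ℤ) := by
        have : 2*(μ:ℚ) < (k:ℚ) := by rw [hC, hA] at hCA; linarith
        exact_mod_cast this
      have hF2 : 2*((n:ℤ) - 2*k + ℓ) < (k:ℤ) := by
        have : 2*((n:ℚ) - 2*k + ℓ) < (k:ℚ) := by rw [hF, hA] at hFA; linarith
        exact_mod_cast this
      have hmk : (n:ℤ) - k - 1 ≤ (k:ℤ) := by
        have : (n:ℚ) - k - 1 ≤ (k:ℚ) := by rw [hA, hD] at hDA; linarith
        exact_mod_cast this
      rcases Nat.even_or_odd k with he | ho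
      · obtain ⟨t, ht⟩ := he
        refine ⟨(t:ℤ), ?_⟩
        rw [max_eq_left (max_le hDA hAM.le), hA, ht]
        push_cast
        ring
      · obtain ⟨t, ht⟩ := ho
        exfalso
        have htZ : (k:ℤ) = 2*(t:ℤ) + 1 := by exact_mod_cast ht
        rcases Nat.eq_zero_or_pos t with ht0 | ht1
        · omega
        · exact aux1 (t:ℤ) (k:ℤ) (ℓ:ℤ) (μ:ℤ) ((n:ℤ) - k - 1)
            (by exact_mod_cast ht1) htZ (by omega) hmk
            (by omega) (by omega) (by omega)
            hidZ
end
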